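/- arXiv:1709.06771 — 6 statements merged into one kernel-verified Lean document; each statement's English description precedes it below -/
import Mathlib

section
/- Let T > 0 and let p : [0,T] → ℝ be continuous. For each N ≥ 1 let p^N : Ω × [0,T] → ℝ be a stochastic process on a probability space (Ω, F, P) such that for every ω the map t ↦ p^N_t(ω) is nonincreasing on [0,T], each p^N_t is measurable, and for every fixed t ∈ [0,T] the sequence p^N_t converges to p_t in probability as N → ∞. Then sup_{t∈[0,T]} |p^N_t − p_t| converges to 0 in probability as N → ∞ (this supremum is a well-defined random variable since each p^N(ω,·) is monotone and p is continuous, so it equals the supremum over rationals in [0,T] together with the endpoints). -/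
open MeasureTheory Set Filter
open scoped ENNReal Topology

/-- Dini-type lemma: if for each `N` the random function `t ↦ p^N_t(ω)` is
nonincreasing on `[0,T]`, the limit `p` is continuous on `[0,T]`, and `p^N_t → p_t` in
probability for each fixed `t ∈ [0,T]`, then `sup_{t ∈ [0,T]} |p^N_t − p_t| → 0` in
probability. -/
theorem stmt_1 {Ω : Type*} [MeasurableSpace Ω] (P : Measure Ω) [IsProbabilityMeasure P]
    (T : ℝ) (hT : 0 < T) (p : ℝ → ℝ) (hp : ContinuousOn p (Set.Icc 0 T))
    (pN : ℕ → Ω → ℝ → ℝ)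
    (hmono : ∀ N ω, AntitoneOn (pN N ω) (Set.Icc 0 T))
    (hmeas : ∀ N t, Measurable fun ω => pN N ω t)
    (hconv : ∀ t ∈ Set.Icc (0 : ℝ) T, ∀ ε : ℝ, 0 < ε →
        Tendsto (fun N => P {ω | ε < |pN N ω t - p t|}) atTop (𝓝 0)) :
    ∀ ε : ℝ, 0 < ε →
      Tendsto (fun N => P {ω | ε < ⨆ t : Set.Icc (0 : ℝ) T, |pN N ω t - p t|})
        atTop (𝓝 0) := by
  -- First: the limit `p` is antitone on `[0, T]`.
  have hpanti : AntitoneOn p (Set.Icc 0 T) := by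
    intro s hs t ht hst
    by_contra hcon
    push_neg at hcon
    set η : ℝ := (p t - p s) / 3 with hηdef
    have hη : 0 < η := by simp only [hηdef]; linarith
    have h1 := (hconv s hs η hη).eventually (gt_mem_nhds (show (0 : ℝ≥0∞) < 1/2 by norm_num))
    have h2 := (hconv t ht η hη).eventually (gt_mem_nhds (show (0 : ℝ≥0∞) < 1/2 by norm_num))
    obtain ⟨N, hN1, hN2⟩ := (h1.and h2).exists
    set A := {ω | η < |pN N ω s - p s|} with hA
    set B := {ω | η < |pN N ω t - p t|} with hB
    have hU : P (A ∪ B) < 1 := by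
      calc P (A ∪ B) ≤ P A + P B := measure_union_le A B
        _ < 1/2 + 1/2 := by
            exact ENNReal.add_lt_add_of_lt_of_le (by norm_num) hN1 hN2.le
        _ = 1 := by rw [one_div]; exact ENNReal.inv_two_add_inv_two
    have hne : A ∪ B ≠ Set.univ := by
      intro h
      rw [h, measure_univ] at hU
      exact lt_irrefl _ hU
    obtain ⟨ω, hω⟩ := Set.ne_univ_iff_exists_notMem _ |>.1 hne
    simp only [Set.mem_union, hA, hB, Set.mem_setOf_eq, not_or, not_lt] at hω
    obtain ⟨hωA, hωB⟩ := hω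
    have hmon := hmono N ω hs ht hst
    have h1' := abs_le.1 hωA
    have h2' := abs_le.1 hωB
    simp only [hηdef] at h1' h2'
    linarith [h1'.1, h1'.2, h2'.1, h2'.2]
  intro ε hε
  -- Uniform continuity of `p` on the compact interval.
  obtain ⟨δ, hδ, hδε⟩ := Metric.uniformContinuousOn_iff.1
    (isCompact_Icc.uniformContinuousOn_of_continuous hp) (ε/4) (by positivity)
  obtain ⟨n, hn⟩ := exists_nat_gt (T / δ)
  set m : ℕ := n + 1 with hm
  have hmpos : (0 : ℝ) < m := by positivity
  have hTm : T / m < δ := by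
    rw [div_lt_iff₀ hmpos]
    have : T / δ < m := lt_of_lt_of_le hn (by exact_mod_cast Nat.le_succ n)
    calc T = (T / δ) * δ := by field_simp
      _ < m * δ := by exact mul_lt_mul_of_pos_right this hδ
      _ = δ * m := mul_comm _ _
  -- the grid
  set f : ℕ → ℝ := fun j => min (j * T / m) T with hf
  have hfmem : ∀ j, f j ∈ Set.Icc (0 : ℝ) T := fun j =>
    ⟨le_min (by positivity) hT.le, min_le_right _ _⟩
  -- the key inclusion
  have key : ∀ N, {ω | ε < ⨆ t : Set.Icc (0 : ℝ) T, |pN N ω t - p t|} ⊆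
      ⋃ j ∈ Finset.range (m + 2), {ω | ε/2 < |pN N ω (f j) - p (f j)|} := by
    intro N ω hω
    by_contra hc
    simp only [Set.mem_iUnion, Set.mem_setOf_eq, not_exists, not_lt, exists_prop,
      not_and] at hc
    have hc' : ∀ j ∈ Finset.range (m + 2), |pN N ω (f j) - p (f j)| ≤ ε/2 := hc
    have hsup : (⨆ t : Set.Icc (0 : ℝ) T, |pN N ω t - p t|) ≤ ε := by
      refine Real.iSup_le ?_ hε.le
      rintro ⟨t, ht0, htT⟩
      simp only
      set i : ℕ := ⌊t * m / T⌋₊ with hi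
      have hx0 : (0 : ℝ) ≤ t * m / T := by positivity
      have hi1 : (i : ℝ) * T / m ≤ t := by
        have := Nat.floor_le hx0
        rw [div_le_iff₀ hmpos, ← hi] at *
        calc (i : ℝ) * T = (i : ℝ) * T := rfl
          _ ≤ (t * m / T) * T := by nlinarith [hT]
          _ = t * m := by field_simp
      have hi2 : t < ((i : ℝ) + 1) * T / m := by
        have h := Nat.lt_floor_add_one (t * m / T)
        rw [lt_div_iff₀ hmpos]
        calc t * m = (t * m / T) * T := by field_simp
          _ < ((i : ℝ) + 1) * T := by
              have := Nat.lt_floor_add_one (t * m / T)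
              nlinarith [hT]
      have him : i ≤ m := by
        have h1 : (i : ℝ) ≤ t * m / T := Nat.floor_le hx0
        have h2 : t * m / T ≤ m := by
          rw [div_le_iff₀ hT]
          nlinarith
        exact_mod_cast h1.trans h2
      -- grid points around t
      have hu_eq : f i = (i : ℝ) * T / m := min_eq_left (hi1.trans htT)
      set u : ℝ := (i : ℝ) * T / m with hu
      set v : ℝ := f (i + 1) with hv
      have hu_le_t : u ≤ t := hi1
      have hcast : ((i : ℝ) + 1) = ((i + 1 : ℕ) : ℝ) := by push_cast; ring
      have ht_le_v : t ≤ v := le_min (by rw [← hcast]; exact hi2.le) htT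
      have hu_mem : u ∈ Set.Icc (0 : ℝ) T := hu_eq ▸ hfmem i
      have hv_mem : v ∈ Set.Icc (0 : ℝ) T := hfmem (i + 1)
      have hdu : dist u t < δ := by
        rw [Real.dist_eq, abs_sub_comm, abs_of_nonneg (by linarith)]
        have : t - u < T / m := by
          simp only [hu]
          have : ((i : ℝ) + 1) * T / m = (i : ℝ) * T / m + T / m := by ring
          linarith [hi2, this ▸ hi2]
        linarith
      have hdv : dist v t < δ := by
        rw [Real.dist_eq, abs_of_nonneg (by linarith)]
        have hvle : v ≤ ((i : ℝ) + 1) * T / m := by rw [hcast]; exact min_le_left _ _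
        have : ((i : ℝ) + 1) * T / m = (i : ℝ) * T / m + T / m := by ring
        have : v - t ≤ T / m := by
          simp only [hu] at hu_le_t
          linarith [hvle, this ▸ hvle]
        linarith
      have hpu : |p u - p t| < ε/4 := by
        have := hδε u hu_mem t ⟨ht0, htT⟩ hdu
        rwa [Real.dist_eq] at this
      have hpv : |p v - p t| < ε/4 := by
        have := hδε v hv_mem t ⟨ht0, htT⟩ hdv
        rwa [Real.dist_eq] at this
      have hgu : |pN N ω u - p u| ≤ ε/2 := by
        have := hc' i (Finset.mem_range.2 (by omega))
        rwa [hu_eq] at this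
      have hgv : |pN N ω v - p v| ≤ ε/2 := hc' (i + 1) (Finset.mem_range.2 (by omega))
      have hmon1 : pN N ω t ≤ pN N ω u := hmono N ω hu_mem ⟨ht0, htT⟩ hu_le_t
      have hmon2 : pN N ω v ≤ pN N ω t := hmono N ω ⟨ht0, htT⟩ hv_mem ht_le_v
      have h1 := abs_le.1 hgu
      have h2 := abs_le.1 hgv
      have h3 := abs_lt.1 hpu
      have h4 := abs_lt.1 hpv
      rw [abs_le]
      constructor <;> linarith
    rw [Set.mem_setOf_eq] at hω
    linarith
  -- sum of the grid-point probabilities tends to 0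
  have hsum : Tendsto (fun N => ∑ j ∈ Finset.range (m + 2),
      P {ω | ε/2 < |pN N ω (f j) - p (f j)|}) atTop (𝓝 0) := by
    have := tendsto_finset_sum (Finset.range (m + 2))
      (fun j _ => hconv (f j) (hfmem j) (ε/2) (half_pos hε))
    simpa using this
  refine tendsto_of_tendsto_of_tendsto_of_le_of_le tendsto_const_nhds hsum
    (fun N => zero_le) (fun N => ?_)
  calc P {ω | ε < ⨆ t : Set.Icc (0 : ℝ) T, |pN N ω t - p t|}
      ≤ P (⋃ j ∈ Finset.range (m + 2), {ω | ε/2 < |pN N ω (f j) - p (f j)|}) :=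
        measure_mono (key N)
    _ ≤ ∑ j ∈ Finset.range (m + 2), P {ω | ε/2 < |pN N ω (f j) - p (f j)|} :=
        measure_biUnion_finset_le _ _
end

section
/- Let (Ω, F, (F_t)_{t≥0}, P) be a filtered probability space and τ a stopping time with respect to (F_t). Let F_τ denote the stopped σ-algebra {A ∈ F : A ∩ {τ ≤ t} ∈ F_t for all t}, and let F_{τ⁻} denote the σ-algebra generated by F_0 together with all sets of the form A ∩ {t < τ} with t ≥ 0 and A ∈ F_t. Let U be an integrable real random variable that is F_τ-measurable and satisfies E[U | F_{τ⁻}] = 0 almost surely. Then the process t ↦ U · 1_{τ ≤ t} is a martingale with respect to (F_t)_{t≥0}. -/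
open MeasureTheory Set Filter
open scoped NNReal Topology

/-- Let `τ` be a stopping time for a filtration `ℱ`, let `F_τ` be the stopped
σ-algebra and `F_{τ⁻}` the σ-algebra generated by `ℱ 0` together with the sets
`A ∩ {t < τ}`, `A ∈ ℱ t`.  If `U` is integrable, `F_τ`-measurable and `E[U | F_{τ⁻}] = 0`
a.s., then `t ↦ U · 1_{τ ≤ t}` is a martingale. -/
theorem stmt_2 {Ω : Type*} {m : MeasurableSpace Ω} (ℱ : Filtration ℝ≥0 m)
    (P : Measure Ω) [IsProbabilityMeasure P]
    (τ : Ω → ℝ≥0) (hτ : IsStoppingTime ℱ (fun ω => (τ ω : WithTop ℝ≥0)))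
    (U : Ω → ℝ) (hUint : Integrable U P)
    (hUmeas : Measurable[hτ.measurableSpace] U)
    (hUcond : P[U | MeasurableSpace.generateFrom
        ({s | MeasurableSet[ℱ 0] s} ∪
          {s | ∃ (t : ℝ≥0) (A : Set Ω), MeasurableSet[ℱ t] A ∧ s = A ∩ {ω | t < τ ω}})]
        =ᵐ[P] 0) :
    Martingale (fun t ω => if τ ω ≤ t then U ω else 0) ℱ P := by
  -- {t < τ} is ℱ t measurable
  have hlt : ∀ t : ℝ≥0, MeasurableSet[ℱ t] {ω | t < τ ω} := by
    intro t
    have : {ω | t < τ ω} = {ω | τ ω ≤ t}ᶜ := by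
      ext ω; simp [not_le]
    rw [this]
    exact (by simpa only [WithTop.coe_le_coe] using hτ t : MeasurableSet[ℱ t] {ω | τ ω ≤ t}).compl
  have hGle : MeasurableSpace.generateFrom
        ({s | MeasurableSet[ℱ 0] s} ∪
          {s | ∃ (t : ℝ≥0) (A : Set Ω), MeasurableSet[ℱ t] A ∧ s = A ∩ {ω | t < τ ω}}) ≤ m := by
    refine MeasurableSpace.generateFrom_le ?_
    rintro s (hs | ⟨t, A, hA, rfl⟩)
    · exact ℱ.le 0 s hs
    · exact (ℱ.le t A hA).inter (ℱ.le t _ (hlt t))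
  -- integral of U over generator sets vanishes
  have hzero : ∀ (t : ℝ≥0) (A : Set Ω), MeasurableSet[ℱ t] A →
      ∫ ω in A ∩ {ω | t < τ ω}, U ω ∂P = 0 := by
    intro t A hA
    have hB : MeasurableSet[MeasurableSpace.generateFrom
        ({s | MeasurableSet[ℱ 0] s} ∪
          {s | ∃ (t : ℝ≥0) (A : Set Ω), MeasurableSet[ℱ t] A ∧ s = A ∩ {ω | t < τ ω}})]
        (A ∩ {ω | t < τ ω}) :=
      MeasurableSpace.measurableSet_generateFrom (Or.inr ⟨t, A, hA, rfl⟩)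
    rw [← setIntegral_condExp hGle hUint hB]
    refine integral_eq_zero_of_ae ?_
    exact ae_restrict_of_ae hUcond
  -- measurability of each X t w.r.t. ℱ t
  have hmeas : ∀ t : ℝ≥0, Measurable[ℱ t] fun ω => if τ ω ≤ t then U ω else 0 := by
    intro t
    have heq : (fun ω => if τ ω ≤ t then U ω else 0)
        = Set.indicator {ω | τ ω ≤ t} U := by
      funext ω; simp [Set.indicator_apply]
    rw [heq]
    intro B hB
    rw [Set.indicator_preimage]
    have h1 : MeasurableSet[ℱ t] (U ⁻¹' B ∩ {ω | τ ω ≤ t}) :=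
      by simpa only [WithTop.coe_le_coe] using ((hτ.measurableSet (U ⁻¹' B)).mp (hUmeas hB)).2 t
    exact h1.union (((measurable_const (a := (0:ℝ))) hB).diff (by simpa only [WithTop.coe_le_coe] using hτ t))
  -- integrability of each X t
  have hXint : ∀ t : ℝ≥0, Integrable (fun ω => if τ ω ≤ t then U ω else 0) P := by
    intro t
    have heq : (fun ω => if τ ω ≤ t then U ω else 0)
        = Set.indicator {ω | τ ω ≤ t} U := by
      funext ω; simp [Set.indicator_apply]
    rw [heq]
    exact hUint.indicator (ℱ.le t _ (by simpa only [WithTop.coe_le_coe] using hτ t))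
  -- key integral identity
  have key : ∀ (u : ℝ≥0) (A : Set Ω), MeasurableSet[ℱ u] A →
      ∫ ω in A, (if τ ω ≤ u then U ω else 0) ∂P = ∫ ω in A, U ω ∂P := by
    intro u A hA
    have hptw : ∀ ω, (if τ ω ≤ u then U ω else 0)
        = U ω - Set.indicator {ω | u < τ ω} U ω := by
      intro ω
      by_cases h : τ ω ≤ u
      · simp [h, Set.indicator_apply, not_lt.mpr h]
      · simp [h, Set.indicator_apply, not_le.mp h]
    have hindint : Integrable (Set.indicator {ω | u < τ ω} U) P :=
      hUint.indicator (ℱ.le u _ (hlt u))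
    calc ∫ ω in A, (if τ ω ≤ u then U ω else 0) ∂P
        = ∫ ω in A, (U ω - Set.indicator {ω | u < τ ω} U ω) ∂P := by
          simp_rw [hptw]
      _ = ∫ ω in A, U ω ∂P - ∫ ω in A, Set.indicator {ω | u < τ ω} U ω ∂P :=
          integral_sub hUint.integrableOn hindint.integrableOn
      _ = ∫ ω in A, U ω ∂P := by
          rw [setIntegral_indicator (ℱ.le u _ (hlt u)), hzero u A hA,
            sub_zero]
  constructor
  · intro t
    exact (hmeas t).stronglyMeasurable
  · intro s t hst
    refine (ae_eq_condExp_of_forall_setIntegral_eq (ℱ.le s) (hXint t)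
      (fun A _ _ => (hXint s).integrableOn)
      (fun A hA _ => ?_)
      ((hmeas s).stronglyMeasurable.aestronglyMeasurable)).symm
    rw [key s A hA, key t A (ℱ.mono hst A hA)]
end

section
/- Let N ≥ 2 be an integer, c ≥ 0, and a_1, …, a_N real numbers with |a_i| ≤ c for every i. Fix n ∈ {1, …, N}. Define V := (1/N) Σ_{i=1}^N a_i² − ((1/N) Σ_{i=1}^N a_i)² (the empirical variance of all N values) and V' := (1/(N−1)) Σ_{i≠n} a_i² − ((1/(N−1)) Σ_{i≠n} a_i)² (the empirical variance of the N−1 values excluding a_n). Then |(1 − 1/N)² V' − V| ≤ 14 c² / N. -/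
/-- Leave-one-out empirical variance comparison: for `N ≥ 2` and reals
`a_1, …, a_N` with `|a_i| ≤ c`, the empirical variance `V` of all `N` values and the empirical
variance `V'` of the `N − 1` values excluding index `n` satisfy
`|(1 − 1/N)² V' − V| ≤ 14 c² / N`. -/
theorem stmt_4 (N : ℕ) (hN : 2 ≤ N) (c : ℝ) (hc : 0 ≤ c) (a : Fin N → ℝ)
    (ha : ∀ i, |a i| ≤ c) (n : Fin N) :
    |(1 - 1 / (N : ℝ)) ^ 2 *
          ((∑ i ∈ Finset.univ.erase n, (a i) ^ 2) / ((N : ℝ) - 1)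
            - ((∑ i ∈ Finset.univ.erase n, a i) / ((N : ℝ) - 1)) ^ 2)
        - ((∑ i, (a i) ^ 2) / (N : ℝ) - ((∑ i, a i) / (N : ℝ)) ^ 2)|
      ≤ 14 * c ^ 2 / (N : ℝ) := by
  have hN1 : (2 : ℝ) ≤ (N : ℝ) := by exact_mod_cast hN
  have hNpos : (0 : ℝ) < (N : ℝ) := by linarith
  have hN0 : (N : ℝ) ≠ 0 := ne_of_gt hNpos
  have hNm1 : (N : ℝ) - 1 ≠ 0 := by intro h; linarith [h]
  set S : ℝ := ∑ i, a i with hS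
  set Q : ℝ := ∑ i, (a i) ^ 2 with hQ
  have hES : ∑ i ∈ Finset.univ.erase n, a i = S - a n :=
    Finset.sum_erase_eq_sub (Finset.mem_univ n)
  have hEQ : ∑ i ∈ Finset.univ.erase n, (a i) ^ 2 = Q - (a n) ^ 2 :=
    Finset.sum_erase_eq_sub (Finset.mem_univ n)
  rw [hES, hEQ]
  have hid : (1 - 1 / (N : ℝ)) ^ 2 *
          ((Q - (a n) ^ 2) / ((N : ℝ) - 1) - ((S - a n) / ((N : ℝ) - 1)) ^ 2)
        - (Q / (N : ℝ) - (S / (N : ℝ)) ^ 2)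
      = (2 * S * a n - Q - (N : ℝ) * (a n) ^ 2) / (N : ℝ) ^ 2 := by
    field_simp
    ring
  rw [hid]
  have hSb : |S| ≤ (N : ℝ) * c := by
    calc |S| ≤ ∑ i, |a i| := Finset.abs_sum_le_sum_abs _ _
    _ ≤ ∑ _i : Fin N, c := Finset.sum_le_sum fun i _ => ha i
    _ = (N : ℝ) * c := by simp [mul_comm]
  have hQb : |Q| ≤ (N : ℝ) * c ^ 2 := by
    calc |Q| ≤ ∑ i, |(a i) ^ 2| := Finset.abs_sum_le_sum_abs _ _
    _ ≤ ∑ _i : Fin N, c ^ 2 := by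
        refine Finset.sum_le_sum fun i _ => ?_
        rw [abs_pow]
        exact pow_le_pow_left₀ (abs_nonneg _) (ha i) 2
    _ = (N : ℝ) * c ^ 2 := by simp [mul_comm]
  have han : |a n| ≤ c := ha n
  have han2 : (a n) ^ 2 ≤ c ^ 2 := by
    have := pow_le_pow_left₀ (abs_nonneg (a n)) han 2
    rwa [sq_abs] at this
  have hnum : |2 * S * a n - Q - (N : ℝ) * (a n) ^ 2| ≤ 4 * ((N : ℝ) * c ^ 2) := by
    have h1 : |2 * S * a n| ≤ 2 * ((N : ℝ) * c ^ 2) := by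
      rw [abs_mul, abs_mul, abs_two]
      nlinarith [abs_nonneg S, abs_nonneg (a n)]
    have h2 : |(N : ℝ) * (a n) ^ 2| ≤ (N : ℝ) * c ^ 2 := by
      rw [abs_mul, Nat.abs_cast, abs_of_nonneg (sq_nonneg _)]
      exact mul_le_mul_of_nonneg_left han2 (le_of_lt hNpos)
    calc |2 * S * a n - Q - (N : ℝ) * (a n) ^ 2|
        ≤ |2 * S * a n| + |Q| + |(N : ℝ) * (a n) ^ 2| := by
          have := abs_sub (2 * S * a n - Q) ((N : ℝ) * (a n) ^ 2)
          have := abs_sub (2 * S * a n) Q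
          calc |2 * S * a n - Q - (N : ℝ) * (a n) ^ 2|
              ≤ |2 * S * a n - Q| + |(N : ℝ) * (a n) ^ 2| := abs_sub _ _
          _ ≤ |2 * S * a n| + |Q| + |(N : ℝ) * (a n) ^ 2| := by
              linarith [abs_sub (2 * S * a n) Q]
    _ ≤ 4 * ((N : ℝ) * c ^ 2) := by linarith
  rw [abs_div, abs_of_nonneg (sq_nonneg ((N : ℝ)))]
  rw [div_le_div_iff₀ (by positivity) hNpos]
  calc |2 * S * a n - Q - (N : ℝ) * (a n) ^ 2| * (N : ℝ)
      ≤ 4 * ((N : ℝ) * c ^ 2) * (N : ℝ) := by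
        exact mul_le_mul_of_nonneg_right hnum (le_of_lt hNpos)
  _ ≤ 14 * c ^ 2 * (N : ℝ) ^ 2 := by nlinarith [sq_nonneg c]
end

section
/- With the sub-Markov semigroup setup below, the following identity holds: Var_{η₀}(Q^Tφ) + p_T·γ_T(φ²) − γ₀((Q^Tφ)²) + (γ_T(φ))²·log p_T + 2∫_{(0,T]} γ_t((Q^{T−t}φ)²) dμ(t) = p_T²·Var_{η_T}(φ) − p_T²·(log p_T)·(η_T(φ))² + 2∫_{(0,T]} Var_{η_t}(Q^{T−t}φ)·p_t dμ(t). -/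
open MeasureTheory ProbabilityTheory Set Filter
open scoped ENNReal Topology

/-- Action of a kernel on a real test function: `κf(x) = ∫ f(y) κ(x,dy)`. -/
noncomputable def kapply {E : Type*} [MeasurableSpace E]
    (κ : ProbabilityTheory.Kernel E E) (f : E → ℝ) (x : E) : ℝ :=
  ∫ y, f y ∂(κ x)

/-- The unnormalized measure `γ_t(ψ) = ∫ Q^t ψ dη₀`. -/
noncomputable def gammaMeas {E : Type*} [MeasurableSpace E]
    (Q : ℝ → ProbabilityTheory.Kernel E E) (η₀ : Measure E) (t : ℝ) (ψ : E → ℝ) : ℝ :=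
  ∫ x, kapply (Q t) ψ x ∂η₀

/-- The survival probability `p_t = γ_t(1)`. -/
noncomputable def pFun {E : Type*} [MeasurableSpace E]
    (Q : ℝ → ProbabilityTheory.Kernel E E) (η₀ : Measure E) (t : ℝ) : ℝ :=
  gammaMeas Q η₀ t fun _ => 1

/-- The normalized measure `η_t(ψ) = γ_t(ψ) / p_t`. -/
noncomputable def etaMeas {E : Type*} [MeasurableSpace E]
    (Q : ℝ → ProbabilityTheory.Kernel E E) (η₀ : Measure E) (t : ℝ) (ψ : E → ℝ) : ℝ :=
  gammaMeas Q η₀ t ψ / pFun Q η₀ t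

/-- The variance `Var_{η_t}(ψ) = η_t(ψ²) − (η_t ψ)²`. -/
noncomputable def etaVar {E : Type*} [MeasurableSpace E]
    (Q : ℝ → ProbabilityTheory.Kernel E E) (η₀ : Measure E) (t : ℝ) (ψ : E → ℝ) : ℝ :=
  etaMeas Q η₀ t (fun x => (ψ x) ^ 2) - (etaMeas Q η₀ t ψ) ^ 2

section aux
variable {E : Type*} [MeasurableSpace E]

lemma isFiniteKernel_of_sub (κ : Kernel E E) (hκ : ∀ x, κ x Set.univ ≤ 1) :
    IsFiniteKernel κ := ⟨⟨1, ENNReal.one_lt_top, fun x => hκ x⟩⟩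

lemma kapply_bound (κ : Kernel E E) (hκ : ∀ x, κ x Set.univ ≤ 1) (f : E → ℝ) {C : ℝ}
    (hC : 0 ≤ C) (hf : ∀ x, |f x| ≤ C) (x : E) : |kapply κ f x| ≤ C := by
  have hfin : IsFiniteMeasure (κ x) := ⟨lt_of_le_of_lt (hκ x) ENNReal.one_lt_top⟩
  have h1 : ‖∫ y, f y ∂(κ x)‖ ≤ C * ((κ x) Set.univ).toReal :=
    norm_integral_le_of_norm_le_const (ae_of_all _ fun y => by simpa using hf y)
  have h2 : ((κ x) Set.univ).toReal ≤ 1 := by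
    have := ENNReal.toReal_mono (by simp) (hκ x)
    simpa using this
  calc |kapply κ f x| = ‖∫ y, f y ∂(κ x)‖ := rfl
    _ ≤ C * ((κ x) Set.univ).toReal := h1
    _ ≤ C * 1 := mul_le_mul_of_nonneg_left h2 hC
    _ = C := mul_one C

lemma kapply_measurable (κ : Kernel E E) [IsFiniteKernel κ] {f : E → ℝ}
    (hf : Measurable f) : Measurable (kapply κ f) := by
  have h : StronglyMeasurable fun p : E × E => f p.2 :=
    (hf.comp measurable_snd).stronglyMeasurable
  exact h.integral_kernel_prod_right'.measurable

lemma kapply_integrable (κ : Kernel E E) (hκ : ∀ x, κ x Set.univ ≤ 1) {f : E → ℝ} {C : ℝ}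
    (hf : Measurable f) (hfb : ∀ x, |f x| ≤ C) (x : E) : Integrable f (κ x) := by
  have hfin : IsFiniteMeasure (κ x) := ⟨lt_of_le_of_lt (hκ x) ENNReal.one_lt_top⟩
  exact (integrable_const C).mono' hf.aestronglyMeasurable
    (ae_of_all _ fun y => by simpa using hfb y)

lemma gamma_abs_le (Q : ℝ → Kernel E E) (hsub : ∀ t : ℝ, 0 ≤ t → ∀ x, Q t x Set.univ ≤ 1)
    (η₀ : Measure E) [IsProbabilityMeasure η₀] {t : ℝ} (ht : 0 ≤ t) {ψ : E → ℝ} {C : ℝ}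
    (hC : 0 ≤ C) (hψ : ∀ x, |ψ x| ≤ C) : |gammaMeas Q η₀ t ψ| ≤ C := by
  have h1 : ‖∫ x, kapply (Q t) ψ x ∂η₀‖ ≤ C * (η₀ Set.univ).toReal :=
    norm_integral_le_of_norm_le_const
      (ae_of_all _ fun x => by simpa using kapply_bound (Q t) (hsub t ht) ψ hC hψ x)
  simpa [gammaMeas] using h1

lemma kapply_integrable_eta (η₀ : Measure E) [IsFiniteMeasure η₀] (κ : Kernel E E)
    [IsFiniteKernel κ] (hκ : ∀ x, κ x Set.univ ≤ 1) {f : E → ℝ} {C : ℝ} (hC : 0 ≤ C)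
    (hf : Measurable f) (hfb : ∀ x, |f x| ≤ C) : Integrable (kapply κ f) η₀ :=
  (integrable_const C).mono' (kapply_measurable κ hf).aestronglyMeasurable
    (ae_of_all _ fun x => by simpa using kapply_bound κ hκ f hC hfb x)

lemma p_antitone (Q : ℝ → Kernel E E)
    (hsub : ∀ t : ℝ, 0 ≤ t → ∀ x, Q t x Set.univ ≤ 1)
    (hsemi : ∀ s t : ℝ, 0 ≤ s → 0 ≤ t → ∀ f : E → ℝ, Measurable f →
        (∃ C, ∀ x, |f x| ≤ C) → kapply (Q (s + t)) f = kapply (Q s) (kapply (Q t) f))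
    (η₀ : Measure E) [IsProbabilityMeasure η₀] {s t : ℝ} (hs : 0 ≤ s) (hst : s ≤ t) :
    pFun Q η₀ t ≤ pFun Q η₀ s := by
  haveI hfs : IsFiniteKernel (Q s) := isFiniteKernel_of_sub _ (hsub s hs)
  haveI hfts : IsFiniteKernel (Q (t - s)) := isFiniteKernel_of_sub _ (hsub _ (by linarith))
  haveI hft : IsFiniteKernel (Q t) := isFiniteKernel_of_sub _ (hsub t (by linarith))
  have hone : kapply (Q t) (fun _ => (1:ℝ)) = kapply (Q s) (kapply (Q (t - s)) fun _ => 1) := by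
    have h := hsemi s (t - s) hs (by linarith) (fun _ => 1) measurable_const
      ⟨1, fun _ => by simp⟩
    have h2 : s + (t - s) = t := by ring
    rwa [h2] at h
  have hinner_meas : Measurable (kapply (Q (t - s)) fun _ => (1:ℝ)) :=
    kapply_measurable _ measurable_const
  have hinner_bd : ∀ x, |kapply (Q (t - s)) (fun _ => (1:ℝ)) x| ≤ 1 := fun x =>
    kapply_bound (Q (t - s)) (hsub _ (by linarith)) _ zero_le_one (fun _ => by simp) x
  have hpt : ∀ x, kapply (Q t) (fun _ => (1:ℝ)) x ≤ kapply (Q s) (fun _ => (1:ℝ)) x := by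
    intro x
    rw [hone]
    haveI : IsFiniteMeasure ((Q s) x) :=
      ⟨lt_of_le_of_lt (hsub s hs x) ENNReal.one_lt_top⟩
    exact integral_mono
      (kapply_integrable (Q s) (hsub s hs) hinner_meas hinner_bd x)
      (integrable_const 1)
      (fun y => le_trans (le_abs_self _) (hinner_bd y))
  unfold pFun gammaMeas
  exact integral_mono
    (kapply_integrable_eta η₀ (Q t) (hsub t (by linarith)) zero_le_one measurable_const
      (fun _ => by simp))
    (kapply_integrable_eta η₀ (Q s) (hsub s hs) zero_le_one measurable_const
      (fun _ => by simp))
    hpt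

lemma aesm_of_restrict_Icc {F : ℝ → ℝ} {T : ℝ}
    (hmeas : Measurable ((Set.Icc (0:ℝ) T).restrict F)) (μ : Measure ℝ) :
    AEStronglyMeasurable F (μ.restrict (Set.Ioc 0 T)) := by
  classical
  set G : ℝ → ℝ := Function.extend ((↑) : Set.Icc (0:ℝ) T → ℝ)
    ((Set.Icc (0:ℝ) T).restrict F) (fun _ => 0) with hGdef
  have hemb : MeasurableEmbedding ((↑) : Set.Icc (0:ℝ) T → ℝ) :=
    MeasurableEmbedding.subtype_coe measurableSet_Icc
  have hGm : Measurable G := hemb.measurable_extend hmeas measurable_const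
  refine hGm.aestronglyMeasurable.congr ?_
  refine (ae_restrict_iff' measurableSet_Ioc).mpr (ae_of_all _ fun t ht => ?_)
  have ht' : t ∈ Set.Icc (0:ℝ) T := Set.Ioc_subset_Icc_self ht
  have h1 := Subtype.coe_injective.extend_apply ((Set.Icc (0:ℝ) T).restrict F)
    (fun _ => (0:ℝ)) (⟨t, ht'⟩ : Set.Icc (0:ℝ) T)
  simpa [hGdef, Set.restrict] using h1

end aux


lemma log_sub_bounds {a b : ℝ} (hb : 0 < b) (hab : b ≤ a) :
    (a - b) * a⁻¹ ≤ Real.log a - Real.log b ∧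
      Real.log a - Real.log b ≤ (a - b) * b⁻¹ := by
  have ha : 0 < a := lt_of_lt_of_le hb hab
  have h1 : Real.log (a / b) ≤ a / b - 1 := Real.log_le_sub_one_of_pos (div_pos ha hb)
  have h2 : Real.log (b / a) ≤ b / a - 1 := Real.log_le_sub_one_of_pos (div_pos hb ha)
  rw [Real.log_div ha.ne' hb.ne'] at h1
  rw [Real.log_div hb.ne' ha.ne'] at h2
  constructor
  · have h3 : (a - b) * a⁻¹ = 1 - b / a := by field_simp
    rw [h3]; linarith
  · have h3 : (a - b) * b⁻¹ = a / b - 1 := by field_simp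
    rw [h3]; linarith

lemma keyLog (P : ℝ → ℝ) (T : ℝ) (hT : 0 < T)
    (hcont : ContinuousOn P (Set.Icc 0 T))
    (hanti : ∀ ⦃s t : ℝ⦄, 0 ≤ s → s ≤ t → t ≤ T → P t ≤ P s)
    (hpos : 0 < P T)
    (μ : Measure ℝ)
    (hμ : ∀ s t : ℝ, 0 ≤ s → s ≤ t → t ≤ T →
        μ (Set.Ioc s t) = ENNReal.ofReal (P s - P t)) :
    ∫ t in Set.Ioc 0 T, (P t)⁻¹ ∂μ = Real.log (P 0) - Real.log (P T) := by
  have hPt_pos : ∀ t ∈ Icc (0:ℝ) T, 0 < P t := fun t ht =>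
    lt_of_lt_of_le hpos (hanti ht.1 ht.2 le_rfl)
  have hcont' : ContinuousOn (fun t => (P t)⁻¹) (Icc 0 T) :=
    hcont.inv₀ (fun t ht => (hPt_pos t ht).ne')
  have haesm : AEStronglyMeasurable (fun t => (P t)⁻¹) (μ.restrict (Icc 0 T)) :=
    hcont'.aestronglyMeasurable measurableSet_Icc
  have hInt : ∀ a b : ℝ, 0 ≤ a → a ≤ b → b ≤ T →
      IntegrableOn (fun t => (P t)⁻¹) (Ioc a b) μ := by
    intro a b ha hab hbT
    have hsub : Ioc a b ⊆ Icc (0:ℝ) T :=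
      fun x hx => ⟨le_trans ha (le_of_lt hx.1), le_trans hx.2 hbT⟩
    have hfin : IsFiniteMeasure (μ.restrict (Ioc a b)) := by
      constructor
      rw [Measure.restrict_apply_univ, hμ a b ha hab hbT]
      exact ENNReal.ofReal_lt_top
    refine (integrable_const ((P T)⁻¹)).mono'
      (haesm.mono_measure (Measure.restrict_mono hsub le_rfl)) ?_
    refine (ae_restrict_iff' measurableSet_Ioc).mpr (ae_of_all _ fun t ht => ?_)
    have htI : t ∈ Icc (0:ℝ) T := hsub ht
    rw [Real.norm_eq_abs, abs_of_pos (inv_pos.mpr (hPt_pos t htI))]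
    exact inv_anti₀ hpos (hanti htI.1 htI.2 le_rfl)
  set I := ∫ t in Set.Ioc 0 T, (P t)⁻¹ ∂μ with hI
  set L := Real.log (P 0) - Real.log (P T) with hL
  have key : ∀ ε > (0:ℝ), |I - L| ≤ ε := by
    intro ε hε
    have hP0T : 0 ≤ P 0 - P T := sub_nonneg.mpr (hanti le_rfl (le_of_lt hT) le_rfl)
    have hD : (0:ℝ) < P 0 - P T + 1 := by linarith
    set ε₀ : ℝ := ε * (P T) ^ 2 / (P 0 - P T + 1) with hε₀def
    have hε₀ : 0 < ε₀ := by positivity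
    have hu : UniformContinuousOn P (Icc 0 T) :=
      isCompact_Icc.uniformContinuousOn_of_continuous hcont
    rw [Metric.uniformContinuousOn_iff] at hu
    obtain ⟨δ, hδ, hδ'⟩ := hu ε₀ hε₀
    obtain ⟨n, hn⟩ := exists_nat_gt (T / δ)
    have hn0 : 0 < (n:ℝ) := lt_trans (div_pos hT hδ) hn
    have hTn : T / n < δ := by
      rw [div_lt_iff₀ hn0]
      calc T = (T / δ) * δ := by field_simp
        _ < n * δ := mul_lt_mul_of_pos_right hn hδ
        _ = δ * n := mul_comm _ _
    set ti : ℕ → ℝ := fun i => i * T / n with hti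
    have hti0 : ti 0 = 0 := by simp [hti]
    have htin : ti n = T := by simp only [hti]; exact mul_div_cancel_left₀ T hn0.ne'
    have hti_mono : Monotone ti := by
      intro i j hij
      have : (i:ℝ) ≤ j := Nat.cast_le.mpr hij
      simp only [hti]
      gcongr
    have hti_mem : ∀ i, i ≤ n → ti i ∈ Icc (0:ℝ) T := by
      intro i hi
      refine ⟨by positivity, ?_⟩
      rw [← htin]; exact hti_mono hi
    have htistep : ∀ i : ℕ, ti (i + 1) - ti i = T / n := by
      intro i; simp only [hti]; push_cast; ring
    set A : ℕ → ℝ := fun i => ∫ t in Ioc (ti i) (ti (i+1)), (P t)⁻¹ ∂μ with hA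
    have hsumA : ∀ k, k ≤ n → ∑ i ∈ Finset.range k, A i
        = ∫ t in Ioc 0 (ti k), (P t)⁻¹ ∂μ := by
      intro k hk
      induction k with
      | zero => simp [hti0]
      | succ k ih =>
        have hk' : k ≤ n := Nat.le_of_succ_le hk
        have h0k : 0 ≤ ti k := (hti_mem k hk').1
        have hkk : ti k ≤ ti (k+1) := hti_mono (Nat.le_succ k)
        have hk1T : ti (k+1) ≤ T := (hti_mem (k+1) hk).2
        have hdisj : Disjoint (Ioc (0:ℝ) (ti k)) (Ioc (ti k) (ti (k+1))) := by
          apply Set.disjoint_left.mpr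
          rintro x hx1 hx2
          exact absurd hx1.2 (not_le.mpr hx2.1)
        have hun : Ioc (0:ℝ) (ti (k+1)) = Ioc 0 (ti k) ∪ Ioc (ti k) (ti (k+1)) :=
          (Set.Ioc_union_Ioc_eq_Ioc h0k hkk).symm
        rw [Finset.sum_range_succ, ih hk', hun,
          setIntegral_union hdisj measurableSet_Ioc
            (hInt 0 (ti k) le_rfl h0k (le_trans hkk hk1T))
            (hInt _ _ h0k hkk hk1T)]
    have hIsum : I = ∑ i ∈ Finset.range n, A i := by
      rw [hsumA n le_rfl, htin]
    have hLsum : L = ∑ i ∈ Finset.range n,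
        (Real.log (P (ti i)) - Real.log (P (ti (i+1)))) := by
      rw [Finset.sum_range_sub' (fun i => Real.log (P (ti i))) n, hti0, htin]
    set c : ℝ := ε₀ * ((P T)⁻¹ * (P T)⁻¹) with hc
    have hAB : ∀ i, i < n →
        |A i - (Real.log (P (ti i)) - Real.log (P (ti (i+1))))|
          ≤ (P (ti i) - P (ti (i+1))) * c := by
      intro i hi
      have hiT : ti i ∈ Icc (0:ℝ) T := hti_mem i (le_of_lt hi)
      have hi1T : ti (i+1) ∈ Icc (0:ℝ) T := hti_mem (i+1) hi
      have ha0 : 0 ≤ ti i := hiT.1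
      have hab : ti i ≤ ti (i+1) := hti_mono (Nat.le_succ i)
      have hbT : ti (i+1) ≤ T := hi1T.2
      have hPa : 0 < P (ti i) := hPt_pos _ hiT
      have hPb : 0 < P (ti (i+1)) := hPt_pos _ hi1T
      have hPba : P (ti (i+1)) ≤ P (ti i) := hanti ha0 hab hbT
      have hμab : (μ (Ioc (ti i) (ti (i+1)))).toReal = P (ti i) - P (ti (i+1)) := by
        rw [hμ _ _ ha0 hab hbT, ENNReal.toReal_ofReal (by linarith)]
      have hμfin : μ (Ioc (ti i) (ti (i+1))) < ∞ := by
        rw [hμ _ _ ha0 hab hbT]; exact ENNReal.ofReal_lt_top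
      -- bounds for A i
      have hlow : (P (ti i) - P (ti (i+1))) * (P (ti i))⁻¹ ≤ A i := by
        have := setIntegral_mono_on (f := fun _ => (P (ti i))⁻¹)
          (g := fun t => (P t)⁻¹)
          (integrableOn_const hμfin.ne)
          (hInt _ _ ha0 hab hbT) measurableSet_Ioc
          (fun t ht => by
            have htI : t ∈ Icc (0:ℝ) T :=
              ⟨le_trans ha0 (le_of_lt ht.1), le_trans ht.2 hbT⟩
            exact inv_anti₀ (hPt_pos t htI) (hanti ha0 (le_of_lt ht.1) htI.2))
        rwa [setIntegral_const, measureReal_def, hμab, smul_eq_mul] at this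
      have hhigh : A i ≤ (P (ti i) - P (ti (i+1))) * (P (ti (i+1)))⁻¹ := by
        have := setIntegral_mono_on (f := fun t => (P t)⁻¹)
          (g := fun _ => (P (ti (i+1)))⁻¹)
          (hInt _ _ ha0 hab hbT)
          (integrableOn_const hμfin.ne) measurableSet_Ioc
          (fun t ht => by
            have htI : t ∈ Icc (0:ℝ) T :=
              ⟨le_trans ha0 (le_of_lt ht.1), le_trans ht.2 hbT⟩
            exact inv_anti₀ hPb (hanti (le_trans ha0 (le_of_lt ht.1)) ht.2 hbT))
        rwa [setIntegral_const, measureReal_def, hμab, smul_eq_mul] at this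
      obtain ⟨hBlow, hBhigh⟩ := log_sub_bounds hPb hPba
      have habs : |A i - (Real.log (P (ti i)) - Real.log (P (ti (i+1))))|
          ≤ (P (ti i) - P (ti (i+1))) * (P (ti (i+1)))⁻¹
            - (P (ti i) - P (ti (i+1))) * (P (ti i))⁻¹ :=
        abs_sub_le_iff.mpr ⟨by linarith, by linarith⟩
      refine le_trans habs ?_
      have hdist : P (ti i) - P (ti (i+1)) ≤ ε₀ := by
        have hd : dist (ti i) (ti (i+1)) < δ := by
          rw [Real.dist_eq, abs_of_nonpos (by linarith)]
          have := htistep i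
          linarith
        have := hδ' (ti i) hiT (ti (i+1)) hi1T hd
        rw [Real.dist_eq] at this
        have h2 := le_abs_self (P (ti i) - P (ti (i+1)))
        linarith
      have hPaT : (P (ti i))⁻¹ ≤ (P T)⁻¹ := inv_anti₀ hpos (hanti hiT.1 hiT.2 le_rfl)
      have hPbT : (P (ti (i+1)))⁻¹ ≤ (P T)⁻¹ := inv_anti₀ hpos (hanti hi1T.1 hi1T.2 le_rfl)
      have heq : (P (ti i) - P (ti (i+1))) * (P (ti (i+1)))⁻¹
          - (P (ti i) - P (ti (i+1))) * (P (ti i))⁻¹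
          = (P (ti i) - P (ti (i+1)))
            * ((P (ti i) - P (ti (i+1))) * ((P (ti i))⁻¹ * (P (ti (i+1)))⁻¹)) := by
        field_simp
      rw [heq, hc]
      refine mul_le_mul_of_nonneg_left ?_ (by linarith)
      refine mul_le_mul hdist ?_ (by positivity) (le_of_lt hε₀)
      exact mul_le_mul hPaT hPbT (by positivity) (by positivity)
    have hsum : |I - L| ≤ (P 0 - P T) * c := by
      rw [hIsum, hLsum, ← Finset.sum_sub_distrib]
      refine le_trans (Finset.abs_sum_le_sum_abs _ _) ?_
      have h1 : ∑ i ∈ Finset.range n,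
          |A i - (Real.log (P (ti i)) - Real.log (P (ti (i+1))))|
          ≤ ∑ i ∈ Finset.range n, (P (ti i) - P (ti (i+1))) * c :=
        Finset.sum_le_sum (fun i hi => hAB i (Finset.mem_range.mp hi))
      refine le_trans h1 ?_
      rw [← Finset.sum_mul, Finset.sum_range_sub' (fun i => P (ti i)) n, hti0, htin]
    refine le_trans hsum ?_
    have hceq : c = ε / (P 0 - P T + 1) := by
      rw [hc, hε₀def]
      field_simp
    rw [hceq]
    calc (P 0 - P T) * (ε / (P 0 - P T + 1))
        ≤ (P 0 - P T + 1) * (ε / (P 0 - P T + 1)) := by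
          refine mul_le_mul_of_nonneg_right (by linarith) (by positivity)
      _ = ε := by field_simp
  have h0 : |I - L| ≤ 0 := by
    refine le_of_forall_pos_le_add (fun ε hε => ?_)
    simpa using key ε hε
  have h1 := abs_nonneg (I - L)
  have h2 : I - L = 0 := abs_eq_zero.mp (le_antisymm h0 h1)
  linarith

/-- The two formulations of the asymptotic variance `σ_T²(φ)` agree:
`Var_{η₀}(Q^Tφ) + p_T γ_T(φ²) − γ₀((Q^Tφ)²) + (γ_T φ)² log p_T + 2 ∫_{(0,T]} γ_t((Q^{T−t}φ)²) dμ
  = p_T² Var_{η_T}(φ) − p_T² log p_T (η_T φ)² + 2 ∫_{(0,T]} Var_{η_t}(Q^{T−t}φ) p_t dμ`. -/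
theorem stmt_7 {E : Type*} [MeasurableSpace E]
    (Q : ℝ → ProbabilityTheory.Kernel E E)
    (hsub : ∀ t : ℝ, 0 ≤ t → ∀ x, Q t x Set.univ ≤ 1)
    (hid : ∀ f : E → ℝ, Measurable f → (∃ C, ∀ x, |f x| ≤ C) → kapply (Q 0) f = f)
    (hsemi : ∀ s t : ℝ, 0 ≤ s → 0 ≤ t → ∀ f : E → ℝ, Measurable f →
        (∃ C, ∀ x, |f x| ≤ C) → kapply (Q (s + t)) f = kapply (Q s) (kapply (Q t) f))
    (η₀ : Measure E) [IsProbabilityMeasure η₀]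
    (T : ℝ) (hT : 0 < T)
    (hpcont : ContinuousOn (pFun Q η₀) (Set.Icc 0 T))
    (hpT : 0 < pFun Q η₀ T)
    (μ : Measure ℝ) (hsupp : μ (Set.Ioc 0 T)ᶜ = 0)
    (hμ : ∀ s t : ℝ, 0 ≤ s → s ≤ t → t ≤ T →
        μ (Set.Ioc s t) = ENNReal.ofReal (pFun Q η₀ s - pFun Q η₀ t))
    (φ : E → ℝ) (hφ : Measurable φ) (hφb : ∃ C, ∀ x, |φ x| ≤ C)
    (hmeas : Measurable ((Set.Icc (0 : ℝ) T).restrict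
        fun t => gammaMeas Q η₀ t fun x => (kapply (Q (T - t)) φ x) ^ 2)) :
    ((∫ x, (kapply (Q T) φ x) ^ 2 ∂η₀) - (∫ x, kapply (Q T) φ x ∂η₀) ^ 2)
        + pFun Q η₀ T * gammaMeas Q η₀ T (fun x => (φ x) ^ 2)
        - gammaMeas Q η₀ 0 (fun x => (kapply (Q T) φ x) ^ 2)
        + (gammaMeas Q η₀ T φ) ^ 2 * Real.log (pFun Q η₀ T)
        + 2 * ∫ t in Set.Ioc 0 T,
            gammaMeas Q η₀ t (fun x => (kapply (Q (T - t)) φ x) ^ 2) ∂μ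
      = (pFun Q η₀ T) ^ 2 * etaVar Q η₀ T φ
        - (pFun Q η₀ T) ^ 2 * Real.log (pFun Q η₀ T) * (etaMeas Q η₀ T φ) ^ 2
        + 2 * ∫ t in Set.Ioc 0 T,
            etaVar Q η₀ t (kapply (Q (T - t)) φ) * pFun Q η₀ t ∂μ := by
  classical
  obtain ⟨C₀, hC₀⟩ := hφb
  set C : ℝ := |C₀| with hCdef
  have hC : 0 ≤ C := abs_nonneg _
  have hφC : ∀ x, |φ x| ≤ C := fun x => (hC₀ x).trans (le_abs_self C₀)
  haveI hQT : IsFiniteKernel (Q T) := isFiniteKernel_of_sub _ (hsub T hT.le)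
  -- basic facts about p
  have hp0 : pFun Q η₀ 0 = 1 := by
    unfold pFun gammaMeas
    rw [hid (fun _ => 1) measurable_const ⟨1, fun _ => by simp⟩]
    simp
  have hanti : ∀ ⦃s t : ℝ⦄, 0 ≤ s → s ≤ t → t ≤ T → pFun Q η₀ t ≤ pFun Q η₀ s :=
    fun s t hs hst _ => p_antitone Q hsub hsemi η₀ hs hst
  have hppos : ∀ t ∈ Set.Icc (0:ℝ) T, 0 < pFun Q η₀ t := fun t ht =>
    lt_of_lt_of_le hpT (hanti ht.1 ht.2 le_rfl)
  -- key log integral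
  have hKey : ∫ t in Set.Ioc 0 T, (pFun Q η₀ t)⁻¹ ∂μ = - Real.log (pFun Q η₀ T) := by
    rw [keyLog (pFun Q η₀) T hT hpcont hanti hpT μ hμ, hp0, Real.log_one]
    ring
  -- measurability / boundedness of Q^Tφ
  have hQTφ_meas : Measurable (kapply (Q T) φ) := kapply_measurable _ hφ
  have hQTφ_bd : ∀ x, |kapply (Q T) φ x| ≤ C := kapply_bound (Q T) (hsub T hT.le) φ hC hφC
  -- the γ₀ term
  have hγ0 : gammaMeas Q η₀ 0 (fun x => (kapply (Q T) φ x) ^ 2)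
      = ∫ x, (kapply (Q T) φ x) ^ 2 ∂η₀ := by
    unfold gammaMeas
    rw [hid _ (hQTφ_meas.pow_const 2) ⟨C ^ 2, fun x => by
      rw [abs_of_nonneg (sq_nonneg _), ← sq_abs]
      exact pow_le_pow_left₀ (abs_nonneg _) (hQTφ_bd x) 2⟩]
  -- semigroup for γ
  have hsg : ∀ t : ℝ, 0 ≤ t → t ≤ T →
      gammaMeas Q η₀ t (kapply (Q (T - t)) φ) = gammaMeas Q η₀ T φ := by
    intro t ht htT
    unfold gammaMeas
    have h := hsemi t (T - t) ht (by linarith) φ hφ ⟨C, hφC⟩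
    have h2 : t + (T - t) = T := by ring
    rw [h2] at h
    rw [← h]
  -- rewrite the RHS set integral
  have hpinv_int : IntegrableOn (fun t => (pFun Q η₀ t)⁻¹) (Set.Ioc 0 T) μ := by
    have hfin : IsFiniteMeasure (μ.restrict (Set.Ioc 0 T)) := by
      constructor
      rw [Measure.restrict_apply_univ, hμ 0 T le_rfl hT.le le_rfl]
      exact ENNReal.ofReal_lt_top
    have hcont' : ContinuousOn (fun t => (pFun Q η₀ t)⁻¹) (Set.Icc 0 T) :=
      hpcont.inv₀ (fun t ht => (hppos t ht).ne')
    refine (integrable_const ((pFun Q η₀ T)⁻¹)).mono'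
      ((hcont'.aestronglyMeasurable measurableSet_Icc).mono_measure
        (Measure.restrict_mono Set.Ioc_subset_Icc_self le_rfl)) ?_
    refine (ae_restrict_iff' measurableSet_Ioc).mpr (ae_of_all _ fun t ht => ?_)
    have htI : t ∈ Set.Icc (0:ℝ) T := Set.Ioc_subset_Icc_self ht
    rw [Real.norm_eq_abs, abs_of_pos (inv_pos.mpr (hppos t htI))]
    exact inv_anti₀ hpT (hanti htI.1 htI.2 le_rfl)
  have hF_int : IntegrableOn
      (fun t => gammaMeas Q η₀ t (fun x => (kapply (Q (T - t)) φ x) ^ 2))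
      (Set.Ioc 0 T) μ := by
    have hfin : IsFiniteMeasure (μ.restrict (Set.Ioc 0 T)) := by
      constructor
      rw [Measure.restrict_apply_univ, hμ 0 T le_rfl hT.le le_rfl]
      exact ENNReal.ofReal_lt_top
    refine (integrable_const (C ^ 2)).mono' (aesm_of_restrict_Icc hmeas μ) ?_
    refine (ae_restrict_iff' measurableSet_Ioc).mpr (ae_of_all _ fun t ht => ?_)
    rw [Real.norm_eq_abs]
    refine gamma_abs_le Q hsub η₀ ht.1.le (by positivity) (fun x => ?_)
    rw [abs_of_nonneg (sq_nonneg _), ← sq_abs]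
    exact pow_le_pow_left₀ (abs_nonneg _)
      (kapply_bound (Q (T - t)) (hsub _ (by linarith [ht.2])) φ hC hφC x) 2
  have hRHSint : ∫ t in Set.Ioc 0 T, etaVar Q η₀ t (kapply (Q (T - t)) φ) * pFun Q η₀ t ∂μ
      = (∫ t in Set.Ioc 0 T,
          gammaMeas Q η₀ t (fun x => (kapply (Q (T - t)) φ x) ^ 2) ∂μ)
        - (gammaMeas Q η₀ T φ) ^ 2 * ∫ t in Set.Ioc 0 T, (pFun Q η₀ t)⁻¹ ∂μ := by
    have hcongr : Set.EqOn
        (fun t => etaVar Q η₀ t (kapply (Q (T - t)) φ) * pFun Q η₀ t)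
        (fun t => gammaMeas Q η₀ t (fun x => (kapply (Q (T - t)) φ x) ^ 2)
          - (gammaMeas Q η₀ T φ) ^ 2 * (pFun Q η₀ t)⁻¹)
        (Set.Ioc 0 T) := by
      intro t ht
      have htI : t ∈ Set.Icc (0:ℝ) T := Set.Ioc_subset_Icc_self ht
      have hpt : 0 < pFun Q η₀ t := hppos t htI
      have hge : gammaMeas Q η₀ t (kapply (Q (T - t)) φ) = gammaMeas Q η₀ T φ :=
        hsg t htI.1 htI.2
      simp only [etaVar, etaMeas, hge]
      field_simp
    rw [setIntegral_congr_fun measurableSet_Ioc hcongr,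
      integral_sub hF_int (hpinv_int.const_mul _), integral_const_mul]
  -- final algebra
  have hint : ∫ x, kapply (Q T) φ x ∂η₀ = gammaMeas Q η₀ T φ := rfl
  rw [hγ0, hRHSint, hKey, hint]
  simp only [etaVar, etaMeas]
  have hpTne : pFun Q η₀ T ≠ 0 := hpT.ne'
  field_simp
  ring
end

section
/- Let (E, d) be a proper metric space (every closed bounded set is compact) and B ⊆ E. For a càdlàg path z : [0,∞) → E (right-continuous with left limits) define t̄_B(z) := inf{t ≥ 0 : z_{t⁻} ∈ cl(B) or z_t ∈ cl(B)} ∈ [0,∞], where z_{t⁻} denotes the left limit at t (with z_{0⁻} := z_0) and cl(B) the closure of B. Let z and z^1, z^2, … be càdlàg paths, and suppose there exist increasing bijections λ^n : [0,∞) → [0,∞) such that for every t₀ > 0, sup_{0≤t≤t₀} d(z^n_{λ^n(t)}, z_t) → 0 and sup_{0≤t≤t₀} |λ^n(t) − t| → 0 as n → ∞. Then t̄_B(z) ≤ liminf_n t̄_B(z^n). -/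
open Filter Set Topology
open scoped ENNReal NNReal

/-- The hitting time of the closure of `B` by a path `z` together with its left-limit path `zm`:
`t̄_B(z) = inf {t ≥ 0 : z_{t⁻} ∈ cl(B) or z_t ∈ cl(B)}`, with value `∞` if never hit. -/
noncomputable def hitClosure {E : Type*} [MetricSpace E] (B : Set E)
    (z zm : ℝ≥0 → E) : ℝ≥0∞ :=
  ⨅ t ∈ {t : ℝ≥0 | zm t ∈ closure B ∨ z t ∈ closure B}, (t : ℝ≥0∞)

/-- If a càdlàg path (with its left-limit path) hits `closure B` at time `t`, then for any
`ε > 0` there is a time `s ≤ t` at which the path itself is within `ε` of `B`. -/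
lemma near_hit_aux {E : Type*} [MetricSpace E] (B : Set E) (w wm : ℝ≥0 → E)
    (hwm0 : wm 0 = w 0)
    (hwm : ∀ t : ℝ≥0, 0 < t → Tendsto w (𝓝[<] t) (𝓝 (wm t)))
    (t : ℝ≥0) (ht : wm t ∈ closure B ∨ w t ∈ closure B)
    (ε : ℝ) (hε : 0 < ε) : ∃ s ≤ t, Metric.infDist (w s) B < ε := by
  have key : ∀ x : E, x ∈ closure B → Metric.infDist x B = 0 := fun x hx => by
    rw [← Metric.infDist_closure]; exact Metric.infDist_zero_of_mem hx
  rcases ht with h | h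
  · rcases eq_or_lt_of_le (zero_le : (0:ℝ≥0) ≤ t) with ht0 | ht0
    · refine ⟨t, le_rfl, ?_⟩
      rw [← ht0] at h ⊢
      rw [hwm0] at h
      rw [key _ h]; exact hε
    · haveI : (𝓝[<] t).NeBot := nhdsWithin_Iio_self_neBot' ⟨0, ht0⟩
      have htend := hwm t ht0
      have hev : ∀ᶠ s in 𝓝[<] t, w s ∈ Metric.ball (wm t) ε :=
        htend (Metric.ball_mem_nhds (wm t) hε)
      obtain ⟨s, hs1, hs2⟩ := (hev.and self_mem_nhdsWithin).exists
      refine ⟨s, le_of_lt hs2, ?_⟩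
      calc Metric.infDist (w s) B ≤ Metric.infDist (wm t) B + dist (w s) (wm t) :=
            Metric.infDist_le_infDist_add_dist
        _ = dist (w s) (wm t) := by rw [key _ h, zero_add]
        _ < ε := hs1
  · exact ⟨t, le_rfl, by rw [key _ h]; exact hε⟩

/-- If a sequence converges and the distances to `B` tend to `0`, the limit lies in `closure B`. -/
lemma lim_mem_closure_aux {E : Type*} [MetricSpace E] {B : Set E} (hB : B.Nonempty)
    {w : ℕ → E} {x : E} (hw : Tendsto w atTop (𝓝 x)) {δ : ℕ → ℝ}
    (hd : ∀ m, Metric.infDist (w m) B ≤ δ m) (hδ : Tendsto δ atTop (𝓝 0)) :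
    x ∈ closure B := by
  rw [Metric.mem_closure_iff_infDist_zero hB]
  have h1 : Tendsto (fun m => Metric.infDist (w m) B) atTop (𝓝 (Metric.infDist x B)) :=
    ((Metric.continuous_infDist_pt B).tendsto x).comp hw
  have h2 : Metric.infDist x B ≤ 0 :=
    le_of_tendsto_of_tendsto h1 hδ (Eventually.of_forall hd)
  exact le_antisymm h2 Metric.infDist_nonneg

/-- Lower semicontinuity of the closure hitting time along Skorokhod `J1`
convergence, in a proper metric space: if the càdlàg paths `z^n` (with left-limit paths
`znm n`) converge to the càdlàg path `z` (with left-limit path `zm`) in the `J1` sense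
(via time changes `λ^n`), then `t̄_B(z) ≤ liminf_n t̄_B(z^n)`. -/
theorem stmt_14 {E : Type*} [MetricSpace E] [ProperSpace E] (B : Set E)
    (z zm : ℝ≥0 → E) (zn znm : ℕ → ℝ≥0 → E)
    (hz_rc : ∀ t : ℝ≥0, ContinuousWithinAt z (Set.Ici t) t)
    (hzm0 : zm 0 = z 0)
    (hzm : ∀ t : ℝ≥0, 0 < t → Tendsto z (𝓝[<] t) (𝓝 (zm t)))
    (hzn_rc : ∀ (n : ℕ) (t : ℝ≥0), ContinuousWithinAt (zn n) (Set.Ici t) t)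
    (hznm0 : ∀ n, znm n 0 = zn n 0)
    (hznm : ∀ (n : ℕ) (t : ℝ≥0), 0 < t → Tendsto (zn n) (𝓝[<] t) (𝓝 (znm n t)))
    (lam : ℕ → ℝ≥0 → ℝ≥0)
    (hlam_mono : ∀ n, StrictMono (lam n))
    (hlam_bij : ∀ n, Function.Bijective (lam n))
    (hconv : ∀ t₀ : ℝ≥0, ∀ ε : ℝ, 0 < ε → ∃ N : ℕ, ∀ n ≥ N, ∀ t ≤ t₀,
        dist (zn n (lam n t)) (z t) < ε ∧ dist (lam n t) t < ε) :
    hitClosure B z zm ≤ Filter.liminf (fun n => hitClosure B (zn n) (znm n)) Filter.atTop := by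
  rcases B.eq_empty_or_nonempty with hB | hB
  · subst hB
    simp only [hitClosure, closure_empty, Set.mem_empty_iff_false, or_self,
      Set.setOf_false, Set.mem_empty_iff_false, iInf_false, iInf_top]
    simp [Filter.liminf_const]
  refine le_of_forall_lt_imp_le_of_dense fun a ha => ?_
  have haTop : a ≠ ⊤ := (lt_of_lt_of_le ha le_top).ne
  set A : ℝ≥0 := a.toNNReal with hA
  have haA : a = (A : ℝ≥0∞) := (ENNReal.coe_toNNReal haTop).symm
  have hev : ∀ᶠ n in atTop, a ≤ hitClosure B (zn n) (znm n) := by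
    by_contra hcon
    have hfreq : ∃ᶠ n in atTop, hitClosure B (zn n) (znm n) < a := by
      simpa only [not_le] using Filter.not_eventually.mp hcon
    -- Step 1: produce, for each k, a time u ≤ A + 1/(k+1) where z is 2/(k+1)-close to B.
    have main : ∀ k : ℕ, ∃ u : ℝ≥0,
        (u : ℝ) ≤ (A : ℝ) + 1 / (k + 1) ∧ Metric.infDist (z u) B ≤ 2 / (k + 1) := by
      intro k
      have hεk : (0 : ℝ) < 1 / (k + 1) := by positivity
      obtain ⟨N, hN⟩ := hconv (A + 1) (1 / (k + 1)) hεk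
      obtain ⟨n, hnN, hTn⟩ := Filter.frequently_atTop.mp hfreq N
      -- extract a hitting time t < A for z^n
      have hex : ∃ t : ℝ≥0, ∃ _ : znm n t ∈ closure B ∨ zn n t ∈ closure B,
          (t : ℝ≥0∞) < a := by
        rw [hitClosure] at hTn
        simpa only [iInf_lt_iff, Set.mem_setOf_eq] using hTn
      obtain ⟨t, htmem, htlt⟩ := hex
      have htA : t < A := by rwa [haA, ENNReal.coe_lt_coe] at htlt
      -- a near-hitting time s ≤ t of the path z^n itself
      obtain ⟨s, hst, hsd⟩ := near_hit_aux B (zn n) (znm n) (hznm0 n) (hznm n) t htmem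
        (1 / (k + 1)) hεk
      have hsA : s < A := lt_of_le_of_lt hst htA
      -- pull s back through lam n
      obtain ⟨u, hu⟩ := (hlam_bij n).surjective s
      -- u < A + 1
      have hbound := (hN n hnN (A + 1) le_rfl).2
      rw [NNReal.dist_eq] at hbound
      have hlamA1 : (A : ℝ) < (lam n (A + 1) : ℝ) := by
        have h1 : (1 : ℝ) / (k + 1) ≤ 1 := by
          rw [div_le_one (by positivity)]
          simp
        have := abs_lt.mp hbound
        push_cast at this ⊢
        linarith [this.1]
      have hsltlam : s < lam n (A + 1) := by
        rw [← NNReal.coe_lt_coe]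
        exact lt_trans (by exact_mod_cast hsA) hlamA1
      have huA1 : u ≤ A + 1 := by
        have : lam n u < lam n (A + 1) := by rw [hu]; exact hsltlam
        exact le_of_lt ((hlam_mono n).lt_iff_lt.mp this)
      obtain ⟨hdz, hdt⟩ := hN n hnN u huA1
      rw [hu] at hdz hdt
      refine ⟨u, ?_, ?_⟩
      · rw [NNReal.dist_eq] at hdt
        have := abs_lt.mp hdt
        have hsA' : (s : ℝ) < (A : ℝ) := by exact_mod_cast hsA
        linarith [this.2]
      · have h1 : Metric.infDist (z u) B ≤ Metric.infDist (zn n s) B + dist (z u) (zn n s) :=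
          Metric.infDist_le_infDist_add_dist
        rw [dist_comm] at hdz
        have : Metric.infDist (z u) B < 1 / (k + 1) + 1 / (k + 1) := by
          calc Metric.infDist (z u) B
              ≤ Metric.infDist (zn n s) B + dist (z u) (zn n s) := h1
            _ < 1 / (k + 1) + 1 / (k + 1) := by exact add_lt_add hsd hdz
        have h2 : (2:ℝ) / (k + 1) = 1 / (k + 1) + 1 / (k + 1) := by ring
        linarith [this]
    choose u hu1 hu2 using main
    -- Step 2: compactness, extract a convergent subsequence of (u k)
    have humem : ∀ k, u k ∈ Set.Icc (0 : ℝ≥0) (A + 1) := by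
      intro k
      refine ⟨zero_le, ?_⟩
      rw [← NNReal.coe_le_coe]
      have h1 : (1 : ℝ) / (k + 1) ≤ 1 := by
        rw [div_le_one (by positivity)]; simp
      push_cast
      linarith [hu1 k]
    obtain ⟨uL, huLmem, ψ, hψ, hψtend⟩ := isCompact_Icc.tendsto_subseq humem
    -- uL ≤ A
    have huLA : uL ≤ A := by
      rw [← NNReal.coe_le_coe]
      have hcoe : Tendsto (fun m => ((u (ψ m) : ℝ))) atTop (𝓝 (uL : ℝ)) :=
        (NNReal.continuous_coe.tendsto uL).comp hψtend
      have hg : Tendsto (fun m : ℕ => (A : ℝ) + 1 / (m + 1)) atTop (𝓝 ((A : ℝ) + 0)) :=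
        tendsto_const_nhds.add tendsto_one_div_add_atTop_nhds_zero_nat
      rw [add_zero] at hg
      refine le_of_tendsto_of_tendsto hcoe hg (Eventually.of_forall fun m => ?_)
      have h1 : (1 : ℝ) / (ψ m + 1) ≤ 1 / (m + 1) := by
        apply one_div_le_one_div_of_le (by positivity)
        have := hψ.le_apply (x := m)
        push_cast
        exact_mod_cast add_le_add_left (by exact_mod_cast this) 1
      linarith [hu1 (ψ m)]
    -- the quantitative closeness along the subsequence
    have hclose : ∀ m : ℕ, Metric.infDist (z (u (ψ m))) B ≤ 2 / (m + 1) := by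
      intro m
      refine le_trans (hu2 (ψ m)) ?_
      apply div_le_div_of_nonneg_left (by norm_num) (by positivity)
      have := hψ.le_apply (x := m)
      exact_mod_cast add_le_add_left (by exact_mod_cast this) 1
    have hδ : Tendsto (fun m : ℕ => 2 / ((m : ℝ) + 1)) atTop (𝓝 0) := by
      have := tendsto_one_div_add_atTop_nhds_zero_nat.const_mul (2 : ℝ)
      simpa [div_eq_mul_inv] using this
    -- final contradiction machinery
    have hfin : hitClosure B z zm ≤ (uL : ℝ≥0∞) → False := by
      intro hle
      have : a < a := by
        calc a < hitClosure B z zm := ha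
          _ ≤ (uL : ℝ≥0∞) := hle
          _ ≤ (A : ℝ≥0∞) := by exact_mod_cast huLA
          _ = a := haA.symm
      exact lt_irrefl a this
    -- Step 3: case split on the side from which u (ψ m) approaches uL
    rcases em (∃ᶠ m in atTop, uL ≤ u (ψ m)) with hc | hc
    · -- approach from the right: use right-continuity
      obtain ⟨χ, hχ, hχprop⟩ := Filter.extraction_of_frequently_atTop hc
      have hvt : Tendsto (fun j => u (ψ (χ j))) atTop (𝓝 uL) :=
        hψtend.comp hχ.tendsto_atTop
      have hvwithin : Tendsto (fun j => u (ψ (χ j))) atTop (𝓝[Set.Ici uL] uL) := by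
        rw [tendsto_nhdsWithin_iff]
        exact ⟨hvt, Eventually.of_forall fun j => hχprop j⟩
      have hz_tend : Tendsto (fun j => z (u (ψ (χ j)))) atTop (𝓝 (z uL)) :=
        (hz_rc uL).tendsto.comp hvwithin
      have hmemcl : z uL ∈ closure B := by
        refine lim_mem_closure_aux hB hz_tend (δ := fun j => 2 / (j + 1))
          (fun j => ?_) hδ
        refine le_trans (hclose (χ j)) ?_
        apply div_le_div_of_nonneg_left (by norm_num) (by positivity)
        exact_mod_cast add_le_add_left (by exact_mod_cast hχ.le_apply (x := j)) 1
      exact hfin (iInf₂_le uL (Or.inr hmemcl))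
    · -- approach from the left: use the left-limit path zm
      have hc' : ∀ᶠ m in atTop, u (ψ m) < uL := by
        simpa only [not_le] using Filter.not_frequently.mp hc
      obtain ⟨χ, hχ, hχprop⟩ := Filter.extraction_of_frequently_atTop hc'.frequently
      have hpos : 0 < uL := lt_of_le_of_lt (zero_le) (hχprop 0)
      have hvt : Tendsto (fun j => u (ψ (χ j))) atTop (𝓝 uL) :=
        hψtend.comp hχ.tendsto_atTop
      have hvwithin : Tendsto (fun j => u (ψ (χ j))) atTop (𝓝[Set.Iio uL] uL) := by
        rw [tendsto_nhdsWithin_iff]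
        exact ⟨hvt, Eventually.of_forall fun j => hχprop j⟩
      have hz_tend : Tendsto (fun j => z (u (ψ (χ j)))) atTop (𝓝 (zm uL)) :=
        (hzm uL hpos).comp hvwithin
      have hmemcl : zm uL ∈ closure B := by
        refine lim_mem_closure_aux hB hz_tend (δ := fun j => 2 / (j + 1))
          (fun j => ?_) hδ
        refine le_trans (hclose (χ j)) ?_
        apply div_le_div_of_nonneg_left (by norm_num) (by positivity)
        exact_mod_cast add_le_add_left (by exact_mod_cast hχ.le_apply (x := j)) 1
      exact hfin (iInf₂_le uL (Or.inl hmemcl))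
  exact Filter.le_liminf_of_le (by isBoundedDefault) hev
end

section
/- Let S and S' be Polish spaces (separable, completely metrizable), and for each n let (U_n, V_n) be a random element of S × S' on some probability space. Let μ₀ be a probability measure on S and ν a probability measure on S'. Assume that for every bounded continuous ψ : S → ℝ and every bounded continuous F : S' → ℝ, E[e^{ψ(U_n)} F(V_n)] → (∫_S e^{ψ} dμ₀)·(∫_{S'} F dν) as n → ∞. Then the law of (U_n, V_n) converges weakly to the product measure μ₀ ⊗ ν on S × S'. -/
open MeasureTheory Filter Metric
open scoped Topology ENNReal

lemma tight_of_tendsto {X : Type*} [TopologicalSpace X] [PolishSpace X] [MeasurableSpace X]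
    [BorelSpace X] (μ : ProbabilityMeasure X) (μs : ℕ → ProbabilityMeasure X)
    (hconv : Tendsto μs atTop (𝓝 μ)) {ε : ℝ≥0∞} (hε : 0 < ε) :
    ∃ K : Set X, IsCompact K ∧ (μ : Measure X) Kᶜ ≤ ε ∧ ∀ n, (μs n : Measure X) Kᶜ ≤ ε := by
  letI := TopologicalSpace.upgradeIsCompletelyMetrizable X
  rcases isEmpty_or_nonempty X with hX | hX
  · exfalso
    have h1 : (μ : Measure X) Set.univ = 1 := measure_univ
    rw [Set.univ_eq_empty_iff.mpr hX, measure_empty] at h1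
    exact zero_ne_one h1
  set u := TopologicalSpace.denseSeq X with hu_def
  have hu : DenseRange u := TopologicalSpace.denseRange_denseSeq X
  -- balls
  set B : ℕ → ℕ → Set X := fun k m => ⋃ i ∈ Finset.range (m + 1), ball (u i) (1 / (k + 1) : ℝ)
    with hB_def
  have hBopen : ∀ k m, IsOpen (B k m) := fun k m =>
    isOpen_biUnion fun i _ => isOpen_ball
  have hBmono : ∀ k, Monotone (B k) := by
    intro k m m' hm
    intro x hx
    simp only [hB_def, Set.mem_iUnion, Finset.mem_range] at hx ⊢
    obtain ⟨i, hi, hxi⟩ := hx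
    exact ⟨i, by omega, hxi⟩
  have hBunion : ∀ k, (⋃ m, B k m) = Set.univ := by
    intro k
    apply Set.eq_univ_of_forall
    intro x
    have hr : (0:ℝ) < 1 / (k + 1) := by positivity
    obtain ⟨i, hi⟩ := Metric.denseRange_iff.mp hu x _ hr
    refine Set.mem_iUnion.mpr ⟨i, Set.mem_iUnion₂.mpr ⟨i, by simp, by simpa [dist_comm] using hi⟩⟩
  -- each probability measure eventually fills B k m
  have key : ∀ (lam : ProbabilityMeasure X) (k : ℕ) (δ : ℝ≥0∞), 0 < δ →
      ∃ m, (lam : Measure X) (B k m)ᶜ < δ := by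
    intro lam k δ hδ
    have h1 : Tendsto (fun m => (lam : Measure X) (B k m)ᶜ) atTop
        (𝓝 ((lam : Measure X) (⋂ m, (B k m)ᶜ))) := by
      apply tendsto_measure_iInter_atTop
      · exact fun m => ((hBopen k m).isClosed_compl).measurableSet.nullMeasurableSet
      · intro m m' hm
        exact Set.compl_subset_compl.mpr (hBmono k hm)
      · exact ⟨0, measure_ne_top _ _⟩
    have h2 : (⋂ m, (B k m)ᶜ) = ∅ := by
      rw [← Set.compl_iUnion, hBunion k, Set.compl_univ]
    rw [h2, measure_empty] at h1
    exact (h1.eventually_lt_const hδ).exists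
  -- for each k, a single m works for μ and all μs n simultaneously
  set δ : ℕ → ℝ≥0∞ := fun k => ε / 2 * (2⁻¹ : ℝ≥0∞) ^ k with hδ_def
  have hδpos : ∀ k, 0 < δ k := by
    intro k
    rw [pos_iff_ne_zero]
    apply mul_ne_zero
    · exact (ENNReal.div_pos_iff.mpr ⟨hε.ne', by norm_num⟩).ne'
    · exact pow_ne_zero k (by norm_num)
  have main : ∀ k, ∃ m, (μ : Measure X) (B k m)ᶜ < δ k ∧
      ∀ n, (μs n : Measure X) (B k m)ᶜ < δ k := by
    intro k
    obtain ⟨m₀, hm₀⟩ := key μ k (δ k) (hδpos k)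
    have hlimsup : (atTop.limsup fun n => (μs n : Measure X) (B k m₀)ᶜ)
        ≤ (μ : Measure X) (B k m₀)ᶜ :=
      ProbabilityMeasure.limsup_measure_closed_le_of_tendsto hconv (hBopen k m₀).isClosed_compl
    have hev : ∀ᶠ n in atTop, (μs n : Measure X) (B k m₀)ᶜ < δ k :=
      eventually_lt_of_limsup_lt (lt_of_le_of_lt hlimsup hm₀)
    obtain ⟨N, hN⟩ := eventually_atTop.mp hev
    choose mm hmm using fun n => key (μs n) k (δ k) (hδpos k)
    refine ⟨max m₀ ((Finset.range N).sup mm), ?_, ?_⟩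
    · exact lt_of_le_of_lt (measure_mono (Set.compl_subset_compl.mpr
        (hBmono k (le_max_left _ _)))) hm₀
    · intro n
      rcases le_or_gt N n with hn | hn
      · exact lt_of_le_of_lt (measure_mono (Set.compl_subset_compl.mpr
          (hBmono k (le_max_left _ _)))) (hN n hn)
      · refine lt_of_le_of_lt (measure_mono (Set.compl_subset_compl.mpr
          (hBmono k (le_trans ?_ (le_max_right _ _))))) (hmm n)
        exact Finset.le_sup (Finset.mem_range.mpr hn)
  choose m hm using main
  have tsum_δ : (∑' k, δ k) = ε := by
    rw [hδ_def, ENNReal.tsum_mul_left, ENNReal.tsum_geometric]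
    have h1 : ((1 : ℝ≥0∞) - 2⁻¹)⁻¹ = 2 := by
      rw [ENNReal.one_sub_inv_two]; simp
    rw [h1, ENNReal.div_mul_cancel (by norm_num) (by norm_num)]
  have bound_aux : ∀ lam : ProbabilityMeasure X,
      (∀ k, (lam : Measure X) (B k (m k))ᶜ < δ k) →
      (lam : Measure X) (⋂ k, closure (B k (m k)))ᶜ ≤ ε := by
    intro lam hlam
    rw [Set.compl_iInter]
    refine le_trans (measure_iUnion_le _) (le_trans (ENNReal.tsum_le_tsum fun k => ?_)
      tsum_δ.le)
    exact le_trans (measure_mono (Set.compl_subset_compl.mpr subset_closure)) (hlam k).le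
  -- the compact set
  refine ⟨⋂ k, closure (B k (m k)), ?_, ?_, ?_⟩
  · apply TotallyBounded.isCompact_of_isClosed
    · rw [Metric.totallyBounded_iff]
      intro r hr
      obtain ⟨k, hk⟩ := exists_nat_one_div_lt (show (0:ℝ) < r / 2 by linarith)
      refine ⟨u '' {i | i < m k + 1}, (Set.finite_Iio _).image u, ?_⟩
      have hsub1 : closure (B k (m k)) ⊆
          ⋃ i ∈ Finset.range (m k + 1), closedBall (u i) (1 / (k + 1 : ℝ)) := by
        apply closure_minimal
        · exact Set.iUnion₂_mono fun i _ => ball_subset_closedBall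
        · exact Set.Finite.isClosed_biUnion (Finset.range (m k + 1)).finite_toSet
            fun i _ => isClosed_closedBall
      have hsub2 : (⋃ i ∈ Finset.range (m k + 1), closedBall (u i) (1 / (k + 1 : ℝ))) ⊆
          ⋃ y ∈ u '' {i | i < m k + 1}, ball y r := by
        intro x hx
        simp only [Set.mem_iUnion, Finset.mem_range] at hx
        obtain ⟨i, hi, hxi⟩ := hx
        refine Set.mem_iUnion₂.mpr ⟨u i, Set.mem_image_of_mem u hi, ?_⟩
        have h2 : (1 : ℝ) / (k + 1) < r / 2 := hk
        have h3 : dist x (u i) ≤ 1 / (k + 1 : ℝ) := hxi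
        exact mem_ball.mpr (by push_cast at h2 h3 ⊢; linarith)
      exact Set.iInter_subset_of_subset k (hsub1.trans hsub2)
    · exact isClosed_iInter fun k => isClosed_closure
  · exact bound_aux μ fun k => (hm k).1
  · exact fun n => bound_aux (μs n) fun k => (hm k).2 n


lemma bdd_integrable {Ω : Type*} [MeasurableSpace Ω] (P : Measure Ω) [IsProbabilityMeasure P]
    {f : Ω → ℝ} (hf : Measurable f) {C : ℝ} (hC : ∀ ω, |f ω| ≤ C) : Integrable f P :=
  (integrable_const C).mono' hf.aestronglyMeasurable
    (ae_of_all _ fun ω => by simpa [Real.norm_eq_abs] using hC ω)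

lemma exp_trick {S S' : Type*}
    [TopologicalSpace S] [MeasurableSpace S] [BorelSpace S]
    [TopologicalSpace S'] [MeasurableSpace S'] [BorelSpace S']
    (Ω : ℕ → Type*) [∀ n, MeasurableSpace (Ω n)]
    (P : ∀ n, Measure (Ω n)) [∀ n, IsProbabilityMeasure (P n)]
    (U : ∀ n, Ω n → S) (V : ∀ n, Ω n → S')
    (hU : ∀ n, Measurable (U n)) (hV : ∀ n, Measurable (V n))
    (μ₀ : Measure S) [IsProbabilityMeasure μ₀]
    (ν : Measure S') [IsProbabilityMeasure ν]
    (h : ∀ (ψ : BoundedContinuousFunction S ℝ) (F : BoundedContinuousFunction S' ℝ),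
        Tendsto (fun n => ∫ ω, Real.exp (ψ (U n ω)) * F (V n ω) ∂(P n)) atTop
          (𝓝 ((∫ x, Real.exp (ψ x) ∂μ₀) * ∫ y, F y ∂ν)))
    (g : BoundedContinuousFunction S ℝ) (F : BoundedContinuousFunction S' ℝ) :
    Tendsto (fun n => ∫ ω, g (U n ω) * F (V n ω) ∂(P n)) atTop
      (𝓝 ((∫ x, g x ∂μ₀) * ∫ y, F y ∂ν)) := by
  have hg0 : (0:ℝ) ≤ ‖g‖ := norm_nonneg g
  set c : ℝ := ‖g‖ + 1 with hc_def
  have hgb : ∀ x, |g x| ≤ ‖g‖ := fun x => by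
    simpa [Real.norm_eq_abs] using g.norm_coe_le_norm x
  have hpos : ∀ x, 0 < g x + c := fun x => by
    have := abs_le.mp (hgb x); simp only [hc_def]; linarith
  have h2c : ∀ x, g x + c ≤ 2 * c := fun x => by
    have := abs_le.mp (hgb x); simp only [hc_def]; linarith
  have hlogb : ∀ x, 0 ≤ Real.log (g x + c) ∧ Real.log (g x + c) ≤ Real.log (2 * c) := by
    intro x
    constructor
    · apply Real.log_nonneg
      have := abs_le.mp (hgb x); simp only [hc_def]; linarith
    · exact Real.log_le_log (hpos x) (h2c x)
  set ψ : BoundedContinuousFunction S ℝ :=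
    ⟨⟨fun x => Real.log (g x + c),
      (g.continuous.add continuous_const).log fun x => (hpos x).ne'⟩,
      Real.log (2 * c), fun x y => by
        rw [Real.dist_eq, abs_sub_le_iff]
        constructor <;> linarith [hlogb x, hlogb y]⟩ with hψ_def
  have hexp : ∀ x, Real.exp (ψ x) = g x + c := fun x => Real.exp_log (hpos x)
  have hψF := h ψ F
  have h0F := h 0 F
  -- rewrite the two convergences
  have hFb : ∀ y, |F y| ≤ ‖F‖ := fun y => by
    simpa [Real.norm_eq_abs] using F.norm_coe_le_norm y
  have int_gF : ∀ n, Integrable (fun ω => (g (U n ω) + c) * F (V n ω)) (P n) := by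
    intro n
    apply bdd_integrable (P n)
      (((g.continuous.measurable.comp (hU n)).add_const c).mul
        (F.continuous.measurable.comp (hV n))) (C := (‖g‖ + c) * ‖F‖)
    intro ω
    simp only [Pi.mul_apply, Function.comp_apply]
    rw [abs_mul]
    apply mul_le_mul _ (hFb _) (abs_nonneg _) (by positivity)
    have := abs_le.mp (hgb (U n ω))
    rw [abs_le]; constructor <;> simp only [hc_def] <;> linarith [hg0, (abs_le.mp (hgb (U n ω))).1, (abs_le.mp (hgb (U n ω))).2]
  have int_F : ∀ n, Integrable (fun ω => F (V n ω)) (P n) := fun n =>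
    bdd_integrable (P n) (F.continuous.measurable.comp (hV n)) fun ω => hFb (V n ω)
  have T1 : Tendsto (fun n => ∫ ω, (g (U n ω) + c) * F (V n ω) ∂(P n)) atTop
      (𝓝 (((∫ x, g x ∂μ₀) + c) * ∫ y, F y ∂ν)) := by
    have e1 : (fun n => ∫ ω, (g (U n ω) + c) * F (V n ω) ∂(P n))
        = fun n => ∫ ω, Real.exp (ψ (U n ω)) * F (V n ω) ∂(P n) := by
      funext n; congr 1; funext ω; rw [hexp]
    have e2 : ((∫ x, g x ∂μ₀) + c) = ∫ x, Real.exp (ψ x) ∂μ₀ := by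
      have : (∫ x, Real.exp (ψ x) ∂μ₀) = ∫ x, (g x + c) ∂μ₀ := by
        congr 1; funext x; rw [hexp]
      rw [this, integral_add (g.integrable μ₀) (integrable_const c), integral_const]
      simp
    rw [e1, e2]; exact hψF
  have T2 : Tendsto (fun n => ∫ ω, F (V n ω) ∂(P n)) atTop (𝓝 (∫ y, F y ∂ν)) := by
    have e1 : (fun n => ∫ ω, F (V n ω) ∂(P n))
        = fun n => ∫ ω, Real.exp ((0 : BoundedContinuousFunction S ℝ) (U n ω)) * F (V n ω) ∂(P n) := by
      funext n; congr 1; funext ω; simp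
    have e2 : (∫ x, Real.exp ((0 : BoundedContinuousFunction S ℝ) x) ∂μ₀) = 1 := by
      simp
    rw [e1]
    have := h0F
    rw [e2, one_mul] at this
    exact this
  have T3 := T1.sub (T2.const_mul c)
  have e3 : (fun n => (∫ ω, (g (U n ω) + c) * F (V n ω) ∂(P n))
      - c * ∫ ω, F (V n ω) ∂(P n)) = fun n => ∫ ω, g (U n ω) * F (V n ω) ∂(P n) := by
    funext n
    rw [← integral_const_mul, ← integral_sub (int_gF n) ((int_F n).const_mul c)]
    congr 1; funext ω; ring
  rw [e3] at T3
  convert T3 using 2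
  ring

lemma abs_int_le {Ω : Type*} [MeasurableSpace Ω] (P : Measure Ω) (f : Ω → ℝ) :
    |∫ ω, f ω ∂P| ≤ ∫ ω, |f ω| ∂P := by
  calc |∫ ω, f ω ∂P| = ‖∫ ω, f ω ∂P‖ := (Real.norm_eq_abs _).symm
    _ ≤ ∫ ω, ‖f ω‖ ∂P := norm_integral_le_integral_norm f
    _ = ∫ ω, |f ω| ∂P := by simp [Real.norm_eq_abs]

lemma pou_approx {X Y : Type*} [MetricSpace X] [MetricSpace Y]
    (G : BoundedContinuousFunction (X × Y) ℝ) {K : Set X} {L : Set Y}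
    (hK : IsCompact K) (hL : IsCompact L) {ε : ℝ} (hε : 0 < ε) :
    ∃ (t : Finset X) (φ : X → BoundedContinuousFunction X ℝ),
      (∀ j ∈ t, (j : X) ∈ K) ∧
      (∀ j x, 0 ≤ φ j x) ∧
      (∀ x, ∑ j ∈ t, φ j x ≤ 1) ∧
      (∀ x ∈ K, ∀ y ∈ L, |G (x, y) - ∑ j ∈ t, φ j x * G (j, y)| ≤ ε) := by
  classical
  set c : ℝ := ‖G‖ with hc_def
  have hc0 : 0 ≤ c := norm_nonneg G
  have hGb : ∀ p : X × Y, |G p| ≤ c := fun p => by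
    simpa [Real.norm_eq_abs] using G.norm_coe_le_norm p
  -- uniform continuity on K ×ˢ L
  have huc : UniformContinuousOn G (K ×ˢ L) :=
    (hK.prod hL).uniformContinuousOn_of_continuous G.continuous.continuousOn
  obtain ⟨r, hr, hGr⟩ := (Metric.uniformContinuousOn_iff).mp huc (ε / 2) (by linarith)
  -- finite cover of K by balls of radius r/2 with centers in K
  obtain ⟨s, hsK, hsfin, hcover⟩ := hK.elim_finite_subcover_image
    (fun x (_ : x ∈ K) => isOpen_ball (x := x) (ε := r / 2))
    (fun x hx => Set.mem_iUnion₂.mpr ⟨x, hx, mem_ball_self (by linarith)⟩)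
  set t : Finset X := hsfin.toFinset with ht_def
  have htK : ∀ j ∈ t, (j : X) ∈ K := fun j hj => hsK (hsfin.mem_toFinset.mp hj)
  set θ : ℝ := ε / (4 * (c + 1)) with hθ_def
  have hθ : 0 < θ := by positivity
  -- tent functions
  set ψ : X → X → ℝ := fun j x => max (1 - dist x j / r) 0 with hψ_def
  have hψ_cont : ∀ j, Continuous (ψ j) := fun j =>
    ((continuous_const.sub ((continuous_id.dist continuous_const).div_const r)).max
      continuous_const)
  have hψ_nonneg : ∀ j x, 0 ≤ ψ j x := fun j x => le_max_right _ _
  have hψ_le_one : ∀ j x, ψ j x ≤ 1 := fun j x => by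
    apply max_le _ zero_le_one
    have : 0 ≤ dist x j / r := by positivity
    linarith
  have hψ_pos_dist : ∀ j x, 0 < ψ j x → dist x j < r := by
    intro j x hx
    by_contra hcon
    push_neg at hcon
    have : dist x j / r ≥ 1 := (one_le_div hr).mpr hcon
    have : ψ j x = 0 := max_eq_right (by linarith)
    linarith
  have hψ_half : ∀ j x, dist x j < r / 2 → (1:ℝ)/2 ≤ ψ j x := by
    intro j x hx
    refine le_max_of_le_left ?_
    have : dist x j / r ≤ 1/2 := by
      rw [div_le_iff₀ hr]; linarith
    linarith
  set sψ : X → ℝ := fun x => ∑ j ∈ t, ψ j x with hsψ_def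
  have hsψ_cont : Continuous sψ := continuous_finset_sum _ fun j _ => hψ_cont j
  have hsψ_nonneg : ∀ x, 0 ≤ sψ x := fun x =>
    Finset.sum_nonneg fun j _ => hψ_nonneg j x
  have hden_pos : ∀ x, 0 < sψ x + θ := fun x => by linarith [hsψ_nonneg x]
  -- the partition functions
  set φ : X → BoundedContinuousFunction X ℝ := fun j =>
    ⟨⟨fun x => ψ j x / (sψ x + θ), ((hψ_cont j).div (hsψ_cont.add continuous_const)
        fun x => (hden_pos x).ne')⟩, 2 / θ, by
      intro x y
      have hbx : 0 ≤ ψ j x / (sψ x + θ) ∧ ψ j x / (sψ x + θ) ≤ 1 / θ := by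
        constructor
        · positivity
        · apply div_le_div₀ (by positivity) (hψ_le_one j x) hθ (by linarith [hsψ_nonneg x])
      have hby : 0 ≤ ψ j y / (sψ y + θ) ∧ ψ j y / (sψ y + θ) ≤ 1 / θ := by
        constructor
        · positivity
        · apply div_le_div₀ (by positivity) (hψ_le_one j y) hθ (by linarith [hsψ_nonneg y])
      rw [Real.dist_eq, abs_sub_le_iff]
      constructor <;> [skip; skip] <;>
        · have h2 : 2 / θ = 1/θ + 1/θ := by ring
          rw [h2]; linarith [hbx.1, hbx.2, hby.1, hby.2]⟩ with hφ_def
  have hφ_apply : ∀ j x, φ j x = ψ j x / (sψ x + θ) := fun j x => rfl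
  have hφ_nonneg : ∀ j x, 0 ≤ φ j x := fun j x => by
    rw [hφ_apply]; positivity
  have hφ_sum : ∀ x, ∑ j ∈ t, φ j x = sψ x / (sψ x + θ) := by
    intro x
    simp only [hφ_apply]
    rw [← Finset.sum_div]
  have hφ_sum_le : ∀ x, ∑ j ∈ t, φ j x ≤ 1 := fun x => by
    rw [hφ_sum]
    apply div_le_one_of_le₀ _ (by linarith [hsψ_nonneg x])
    linarith
  refine ⟨t, φ, htK, hφ_nonneg, hφ_sum_le, ?_⟩
  intro x hx y hy
  -- sum of tents at least 1/2 on K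
  have hsψ_half : (1:ℝ)/2 ≤ sψ x := by
    obtain ⟨j, hj, hjx⟩ := Set.mem_iUnion₂.mp (hcover hx)
    have hjt : j ∈ t := hsfin.mem_toFinset.mpr hj
    calc (1:ℝ)/2 ≤ ψ j x := hψ_half j x (mem_ball.mp hjx)
      _ ≤ sψ x := Finset.single_le_sum (fun i _ => hψ_nonneg i x) hjt
  have hgap : 0 ≤ 1 - ∑ j ∈ t, φ j x ∧ 1 - ∑ j ∈ t, φ j x ≤ 2 * θ := by
    rw [hφ_sum]
    constructor
    · have := hφ_sum_le x; rw [hφ_sum] at this; linarith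
    · have h1 : 1 - sψ x / (sψ x + θ) = θ / (sψ x + θ) := by
        field_simp
        ring
      rw [h1]
      rw [div_le_iff₀ (hden_pos x)]
      nlinarith [hsψ_half, hθ]
  -- decompose
  have hdecomp : G (x, y) - ∑ j ∈ t, φ j x * G (j, y)
      = (∑ j ∈ t, φ j x * (G (x, y) - G (j, y))) + (1 - ∑ j ∈ t, φ j x) * G (x, y) := by
    have e : ∑ j ∈ t, φ j x * (G (x, y) - G (j, y))
        = (∑ j ∈ t, φ j x) * G (x, y) - ∑ j ∈ t, φ j x * G (j, y) := by
      simp only [mul_sub]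
      rw [Finset.sum_sub_distrib, ← Finset.sum_mul]
    rw [e]; ring
  rw [hdecomp]
  have hterm : ∀ j ∈ t, |φ j x * (G (x, y) - G (j, y))| ≤ φ j x * (ε / 2) := by
    intro j hj
    rw [abs_mul, abs_of_nonneg (hφ_nonneg j x)]
    rcases eq_or_lt_of_le (hψ_nonneg j x) with heq | hpos
    · rw [hφ_apply, ← heq]
      simp
    · apply mul_le_mul_of_nonneg_left _ (hφ_nonneg j x)
      have hd : dist x j < r := hψ_pos_dist j x hpos
      have := hGr (x, y) (Set.mk_mem_prod hx hy) (j, y) (Set.mk_mem_prod (htK j hj) hy)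
        (by rw [Prod.dist_eq]; simp only [dist_self]; exact max_lt hd hr)
      rw [Real.dist_eq] at this
      linarith
  calc |(∑ j ∈ t, φ j x * (G (x, y) - G (j, y))) + (1 - ∑ j ∈ t, φ j x) * G (x, y)|
      ≤ |∑ j ∈ t, φ j x * (G (x, y) - G (j, y))| + |(1 - ∑ j ∈ t, φ j x) * G (x, y)| :=
        abs_add_le _ _
    _ ≤ (∑ j ∈ t, φ j x * (ε / 2)) + (2 * θ) * c := by
        apply add_le_add
        · exact le_trans (Finset.abs_sum_le_sum_abs _ _) (Finset.sum_le_sum hterm)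
        · rw [abs_mul]
          apply mul_le_mul (by rw [abs_of_nonneg hgap.1]; exact hgap.2) (hGb (x, y))
            (abs_nonneg _) (by linarith [hθ])
    _ ≤ ε / 2 + ε / 2 := by
        apply add_le_add
        · rw [← Finset.sum_mul]
          calc (∑ j ∈ t, φ j x) * (ε / 2) ≤ 1 * (ε/2) :=
            mul_le_mul_of_nonneg_right (hφ_sum_le x) (by linarith)
            _ = ε / 2 := one_mul _
        · have hqe : θ * (4 * (c + 1)) = ε := by
            rw [hθ_def]; exact div_mul_cancel₀ _ (by positivity)
          nlinarith [hθ.le, hqe, hc0]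
    _ = ε := by ring



/-- If `E[e^{ψ(U_n)} F(V_n)] → μ₀(e^ψ) · ν(F)` for all bounded continuous
`ψ` and `F`, then the joint law of `(U_n, V_n)` converges weakly to the product `μ₀ ⊗ ν`
(weak convergence tested against bounded continuous functions on the product). -/
theorem stmt_15 {S S' : Type*}
    [TopologicalSpace S] [PolishSpace S] [MeasurableSpace S] [BorelSpace S]
    [TopologicalSpace S'] [PolishSpace S'] [MeasurableSpace S'] [BorelSpace S']
    (Ω : ℕ → Type*) [∀ n, MeasurableSpace (Ω n)]
    (P : ∀ n, Measure (Ω n)) [∀ n, IsProbabilityMeasure (P n)]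
    (U : ∀ n, Ω n → S) (V : ∀ n, Ω n → S')
    (hU : ∀ n, Measurable (U n)) (hV : ∀ n, Measurable (V n))
    (μ₀ : Measure S) [IsProbabilityMeasure μ₀]
    (ν : Measure S') [IsProbabilityMeasure ν]
    (h : ∀ (ψ : BoundedContinuousFunction S ℝ) (F : BoundedContinuousFunction S' ℝ),
        Tendsto (fun n => ∫ ω, Real.exp (ψ (U n ω)) * F (V n ω) ∂(P n)) atTop
          (𝓝 ((∫ x, Real.exp (ψ x) ∂μ₀) * ∫ y, F y ∂ν))) :
    ∀ G : BoundedContinuousFunction (S × S') ℝ,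
      Tendsto (fun n => ∫ ω, G (U n ω, V n ω) ∂(P n)) atTop
        (𝓝 (∫ q, G q ∂(μ₀.prod ν))) := by
  classical
  letI := TopologicalSpace.upgradeIsCompletelyMetrizable S
  letI := TopologicalSpace.upgradeIsCompletelyMetrizable S'
  have hg : ∀ (g : BoundedContinuousFunction S ℝ) (F : BoundedContinuousFunction S' ℝ),
      Tendsto (fun n => ∫ ω, g (U n ω) * F (V n ω) ∂(P n)) atTop
        (𝓝 ((∫ x, g x ∂μ₀) * ∫ y, F y ∂ν)) :=
    exp_trick Ω P U V hU hV μ₀ ν h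
  -- marginal laws
  set LU : ℕ → ProbabilityMeasure S :=
    fun n => ⟨(P n).map (U n), Measure.isProbabilityMeasure_map (hU n).aemeasurable⟩ with hLU_def
  set LV : ℕ → ProbabilityMeasure S' :=
    fun n => ⟨(P n).map (V n), Measure.isProbabilityMeasure_map (hV n).aemeasurable⟩ with hLV_def
  set Pμ : ProbabilityMeasure S := ⟨μ₀, inferInstance⟩ with hPμ_def
  set Pν : ProbabilityMeasure S' := ⟨ν, inferInstance⟩ with hPν_def
  have hLUconv : Tendsto LU atTop (𝓝 Pμ) := by
    rw [ProbabilityMeasure.tendsto_iff_forall_integral_tendsto]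
    intro f
    have h1 := hg f 1
    have e2 : (∫ y, (1 : BoundedContinuousFunction S' ℝ) y ∂ν) = 1 := by simp
    have e1 : (fun n => ∫ ω, f (U n ω) * (1 : BoundedContinuousFunction S' ℝ) (V n ω) ∂(P n))
        = fun n => ∫ ω, f (U n ω) ∂(P n) := by
      funext n; congr 1; funext ω; simp
    rw [e1, e2, mul_one] at h1
    have e3 : ∀ n, ∫ x, f x ∂(LU n : Measure S) = ∫ ω, f (U n ω) ∂(P n) := fun n =>
      integral_map (hU n).aemeasurable f.continuous.measurable.aestronglyMeasurable
    simp only [e3]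
    exact h1
  have hLVconv : Tendsto LV atTop (𝓝 Pν) := by
    rw [ProbabilityMeasure.tendsto_iff_forall_integral_tendsto]
    intro f
    have h1 := hg 1 f
    have e2 : (∫ x, (1 : BoundedContinuousFunction S ℝ) x ∂μ₀) = 1 := by simp
    have e1 : (fun n => ∫ ω, (1 : BoundedContinuousFunction S ℝ) (U n ω) * f (V n ω) ∂(P n))
        = fun n => ∫ ω, f (V n ω) ∂(P n) := by
      funext n; congr 1; funext ω; simp
    rw [e1, e2, one_mul] at h1
    have e3 : ∀ n, ∫ y, f y ∂(LV n : Measure S') = ∫ ω, f (V n ω) ∂(P n) := fun n =>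
      integral_map (hV n).aemeasurable f.continuous.measurable.aestronglyMeasurable
    simp only [e3]
    exact h1
  intro G
  set c : ℝ := ‖G‖ with hc_def
  have hc0 : 0 ≤ c := norm_nonneg G
  have hGb : ∀ p : S × S', |G p| ≤ c := fun p => by
    simpa [Real.norm_eq_abs] using G.norm_coe_le_norm p
  rw [Metric.tendsto_atTop]
  intro ε hε
  -- tightness
  set εt : ℝ≥0∞ := ENNReal.ofReal (ε / (32 * (c + 1))) with hεt_def
  have hεt : 0 < εt := ENNReal.ofReal_pos.mpr (by positivity)
  obtain ⟨K, hKcomp, hKμ, hKn⟩ := tight_of_tendsto Pμ LU hLUconv hεt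
  obtain ⟨L, hLcomp, hLν, hLn⟩ := tight_of_tendsto Pν LV hLVconv hεt
  -- approximation
  obtain ⟨t, φ, htK, hφ0, hφsum, happrox⟩ :=
    pou_approx G hKcomp hLcomp (show (0:ℝ) < ε / 8 by linarith)
  set Gy : S → BoundedContinuousFunction S' ℝ := fun j =>
    ⟨⟨fun y => G (j, y), G.continuous.comp (Continuous.prodMk_right j)⟩,
      2 * ‖G‖, fun y y' => G.dist_le_two_norm _ _⟩ with hGy_def
  have hGy_apply : ∀ j y, Gy j y = G (j, y) := fun j y => rfl
  -- the approximant and its pointwise bound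
  have hφsum_nonneg : ∀ x : S, 0 ≤ ∑ j ∈ t, φ j x := fun x =>
    Finset.sum_nonneg fun j _ => hφ0 j x
  have hAbound : ∀ (x : S) (y : S'), |∑ j ∈ t, φ j x * Gy j y| ≤ c := by
    intro x y
    calc |∑ j ∈ t, φ j x * Gy j y| ≤ ∑ j ∈ t, |φ j x * Gy j y| :=
          Finset.abs_sum_le_sum_abs _ _
      _ ≤ ∑ j ∈ t, φ j x * c := by
          apply Finset.sum_le_sum
          intro j hj
          rw [abs_mul, abs_of_nonneg (hφ0 j x)]
          exact mul_le_mul_of_nonneg_left (hGb (j, y)) (hφ0 j x)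
      _ = (∑ j ∈ t, φ j x) * c := by rw [Finset.sum_mul]
      _ ≤ 1 * c := mul_le_mul_of_nonneg_right (hφsum x) hc0
      _ = c := one_mul c
  have hptwise : ∀ (x : S) (y : S'),
      |G (x, y) - ∑ j ∈ t, φ j x * Gy j y|
        ≤ ε / 8 + (2 * c) * Set.indicator (K ×ˢ L)ᶜ (fun _ => (1:ℝ)) (x, y) := by
    intro x y
    by_cases hxy : (x, y) ∈ K ×ˢ L
    · rw [Set.indicator_of_notMem (by simpa using hxy)]
      simp only [mul_zero, add_zero]
      have := happrox x hxy.1 y hxy.2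
      simpa only [hGy_apply] using this
    · rw [Set.indicator_of_mem (by simpa using hxy)]
      have h1 : |G (x, y) - ∑ j ∈ t, φ j x * Gy j y| ≤ c + c :=
        le_trans (abs_sub _ _) (add_le_add (hGb (x, y)) (hAbound x y))
      linarith
  -- convergence of the approximant integrals
  have hA : Tendsto (fun n => ∑ j ∈ t, ∫ ω, φ j (U n ω) * Gy j (V n ω) ∂(P n)) atTop
      (𝓝 (∑ j ∈ t, (∫ x, φ j x ∂μ₀) * ∫ y, Gy j y ∂ν)) :=
    tendsto_finset_sum _ fun j _ => hg (φ j) (Gy j)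
  -- integrability helpers
  have hmeasG : ∀ n, Measurable fun ω => G (U n ω, V n ω) := fun n =>
    G.continuous.measurable.comp ((hU n).prodMk (hV n))
  have hintG : ∀ n, Integrable (fun ω => G (U n ω, V n ω)) (P n) := fun n =>
    bdd_integrable (P n) (hmeasG n) fun ω => hGb _
  have hmeasterm : ∀ n (j : S), Measurable fun ω => φ j (U n ω) * Gy j (V n ω) := fun n j =>
    ((φ j).continuous.measurable.comp (hU n)).mul
      ((Gy j).continuous.measurable.comp (hV n))
  have hintterm : ∀ n (j : S), Integrable (fun ω => φ j (U n ω) * Gy j (V n ω)) (P n) := by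
    intro n j
    apply bdd_integrable (P n) (hmeasterm n j) (C := ‖φ j‖ * ‖G‖)
    intro ω
    rw [abs_mul]
    exact mul_le_mul (by simpa [Real.norm_eq_abs] using (φ j).norm_coe_le_norm (U n ω))
      (hGb _) (abs_nonneg _) (norm_nonneg _)
  have hintA : ∀ n, Integrable (fun ω => ∑ j ∈ t, φ j (U n ω) * Gy j (V n ω)) (P n) :=
    fun n => integrable_finset_sum _ fun j _ => hintterm n j
  -- bound on bad-set measures
  have hbadn : ∀ n, (P n) ((U n ⁻¹' K ∩ V n ⁻¹' L)ᶜ) ≤ εt + εt := by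
    intro n
    rw [Set.compl_inter]
    refine le_trans (measure_union_le _ _) (add_le_add ?_ ?_)
    · have : (U n ⁻¹' K)ᶜ = U n ⁻¹' Kᶜ := rfl
      rw [this, ← Measure.map_apply (hU n) hKcomp.isClosed.measurableSet.compl]
      exact hKn n
    · have : (V n ⁻¹' L)ᶜ = V n ⁻¹' Lᶜ := rfl
      rw [this, ← Measure.map_apply (hV n) hLcomp.isClosed.measurableSet.compl]
      exact hLn n
  have hbadπ : (μ₀.prod ν) ((K ×ˢ L)ᶜ) ≤ εt + εt := by
    have hsub : (K ×ˢ L)ᶜ ⊆ (Kᶜ ×ˢ (Set.univ : Set S')) ∪ ((Set.univ : Set S) ×ˢ Lᶜ) := by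
      intro p hp
      simp only [Set.mem_compl_iff, Set.mem_prod, not_and_or] at hp
      rcases hp with hp | hp
      · exact Or.inl ⟨hp, Set.mem_univ _⟩
      · exact Or.inr ⟨Set.mem_univ _, hp⟩
    refine le_trans (measure_mono hsub) (le_trans (measure_union_le _ _) (add_le_add ?_ ?_))
    · rw [Measure.prod_prod, measure_univ, mul_one]; exact hKμ
    · rw [Measure.prod_prod, measure_univ, one_mul]; exact hLν
  have htail : ((εt + εt : ℝ≥0∞)).toReal ≤ ε / (16 * (c + 1)) := by
    rw [ENNReal.toReal_add (by simp [hεt_def]) (by simp [hεt_def]), hεt_def,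
      ENNReal.toReal_ofReal (by positivity)]
    rw [← add_div]
    rw [div_le_div_iff₀ (by positivity) (by positivity)]
    ring_nf
    nlinarith [hε.le, hc0]
  -- the main estimate for each n
  have est_n : ∀ n, |(∫ ω, G (U n ω, V n ω) ∂(P n))
      - ∑ j ∈ t, ∫ ω, φ j (U n ω) * Gy j (V n ω) ∂(P n)| ≤ ε / 4 := by
    intro n
    set bad : Set (Ω n) := (U n ⁻¹' K ∩ V n ⁻¹' L)ᶜ with hbad_def
    have hbadmeas : MeasurableSet bad :=
      ((hU n hKcomp.isClosed.measurableSet).inter (hV n hLcomp.isClosed.measurableSet)).compl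
    have hindint : Integrable (fun ω => Set.indicator bad (fun _ => (1:ℝ)) ω) (P n) :=
      (integrable_const (1:ℝ)).indicator hbadmeas
    have key : |(∫ ω, G (U n ω, V n ω) ∂(P n))
        - ∫ ω, ∑ j ∈ t, φ j (U n ω) * Gy j (V n ω) ∂(P n)|
        ≤ ε / 8 + (2 * c) * ((P n) bad).toReal := by
      rw [← integral_sub (hintG n) (hintA n)]
      refine le_trans (abs_int_le (P n) _) ?_
      have hmono : ∫ ω, |G (U n ω, V n ω) - ∑ j ∈ t, φ j (U n ω) * Gy j (V n ω)| ∂(P n)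
          ≤ ∫ ω, (ε / 8 + (2 * c) * Set.indicator bad (fun _ => (1:ℝ)) ω) ∂(P n) := by
        apply integral_mono ((hintG n).sub (hintA n)).abs
          ((integrable_const (ε/8)).add (hindint.const_mul (2*c)))
        intro ω
        have := hptwise (U n ω) (V n ω)
        have hiff : (U n ω, V n ω) ∈ (K ×ˢ L)ᶜ ↔ ω ∈ bad := by
          simp [hbad_def, Set.mem_prod]
        have hind : Set.indicator (K ×ˢ L)ᶜ (fun _ => (1:ℝ)) (U n ω, V n ω)
            = Set.indicator bad (fun _ => (1:ℝ)) ω := by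
          by_cases hω : ω ∈ bad
          · rw [Set.indicator_of_mem hω, Set.indicator_of_mem (hiff.mpr hω)]
          · rw [Set.indicator_of_notMem hω,
              Set.indicator_of_notMem (fun hc => hω (hiff.mp hc))]
        rw [hind] at this
        exact this
      refine le_trans hmono ?_
      rw [integral_add (integrable_const _) (hindint.const_mul (2*c)), integral_const,
        integral_const_mul]
      have : ∫ ω, Set.indicator bad (fun _ => (1:ℝ)) ω ∂(P n) = ((P n) bad).toReal := by
        rw [integral_indicator_const (1:ℝ) hbadmeas]
        simp
        rfl
      rw [this]
      simp [measure_univ]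
    have e2 : ∫ ω, ∑ j ∈ t, φ j (U n ω) * Gy j (V n ω) ∂(P n)
        = ∑ j ∈ t, ∫ ω, φ j (U n ω) * Gy j (V n ω) ∂(P n) :=
      integral_finset_sum _ fun j _ => hintterm n j
    rw [e2] at key
    refine le_trans key ?_
    have h1 : ((P n) bad).toReal ≤ ε / (16 * (c + 1)) :=
      le_trans (ENNReal.toReal_mono (by simp [hεt_def]) (hbadn n)) htail
    have h2 : (2 * c) * ((P n) bad).toReal ≤ ε / 8 := by
      calc (2 * c) * ((P n) bad).toReal ≤ (2 * c) * (ε / (16 * (c + 1))) :=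
            mul_le_mul_of_nonneg_left h1 (by linarith)
        _ ≤ ε / 8 := by
            have h4 : ε / (16*(c+1)) * (16*(c+1)) = ε := div_mul_cancel₀ _ (by positivity)
            nlinarith [hε.le, hc0, h4, (show (0:ℝ) ≤ ε/(16*(c+1)) by positivity)]
    linarith
  -- the estimate for the limit measure
  have est_π : |(∫ q, G q ∂(μ₀.prod ν))
      - ∑ j ∈ t, (∫ x, φ j x ∂μ₀) * ∫ y, Gy j y ∂ν| ≤ ε / 4 := by
    set π := μ₀.prod ν with hπ_def
    have hπprob : IsProbabilityMeasure π := by infer_instance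
    have hbadmeas : MeasurableSet ((K ×ˢ L)ᶜ : Set (S × S')) :=
      (hKcomp.isClosed.measurableSet.prod hLcomp.isClosed.measurableSet).compl
    have hindint : Integrable (fun q => Set.indicator (K ×ˢ L)ᶜ (fun _ => (1:ℝ)) q) π :=
      (integrable_const (1:ℝ)).indicator hbadmeas
    have hinttermπ : ∀ j : S, Integrable (fun q : S × S' => φ j q.1 * Gy j q.2) π := by
      intro j
      apply bdd_integrable π (((φ j).continuous.measurable.comp measurable_fst).mul
        ((Gy j).continuous.measurable.comp measurable_snd)) (C := ‖φ j‖ * ‖G‖)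
      intro q
      simp only [Pi.mul_apply, Function.comp_apply]
      rw [abs_mul]
      exact mul_le_mul (by simpa [Real.norm_eq_abs] using (φ j).norm_coe_le_norm q.1)
        (hGb _) (abs_nonneg _) (norm_nonneg _)
    have hintAπ : Integrable (fun q : S × S' => ∑ j ∈ t, φ j q.1 * Gy j q.2) π :=
      integrable_finset_sum _ fun j _ => hinttermπ j
    have e3 : ∑ j ∈ t, (∫ x, φ j x ∂μ₀) * ∫ y, Gy j y ∂ν
        = ∫ q : S × S', ∑ j ∈ t, φ j q.1 * Gy j q.2 ∂π := by
      rw [integral_finset_sum _ fun j _ => hinttermπ j]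
      congr 1
      funext j
      rw [← integral_prod_mul]
    rw [e3]
    have key : |(∫ q, G q ∂π) - ∫ q : S × S', ∑ j ∈ t, φ j q.1 * Gy j q.2 ∂π|
        ≤ ε / 8 + (2 * c) * (π (K ×ˢ L)ᶜ).toReal := by
      rw [← integral_sub (G.integrable π) hintAπ]
      refine le_trans (abs_int_le π _) ?_
      have hmono : ∫ q, |G q - ∑ j ∈ t, φ j q.1 * Gy j q.2| ∂π
          ≤ ∫ q, (ε / 8 + (2 * c) * Set.indicator (K ×ˢ L)ᶜ (fun _ => (1:ℝ)) q) ∂π := by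
        apply integral_mono ((G.integrable π).sub hintAπ).abs
          ((integrable_const (ε/8)).add (hindint.const_mul (2*c)))
        intro q
        have := hptwise q.1 q.2
        simpa using this
      refine le_trans hmono ?_
      rw [integral_add (integrable_const _) (hindint.const_mul (2*c)), integral_const,
        integral_const_mul]
      have : ∫ q, Set.indicator (K ×ˢ L)ᶜ (fun _ => (1:ℝ)) q ∂π = (π (K ×ˢ L)ᶜ).toReal := by
        rw [integral_indicator_const (1:ℝ) hbadmeas]
        simp
        rfl
      rw [this]
      simp [measure_univ]
    refine le_trans key ?_
    have h1 : (π (K ×ˢ L)ᶜ).toReal ≤ ε / (16 * (c + 1)) :=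
      le_trans (ENNReal.toReal_mono (by simp [hεt_def]) hbadπ) htail
    have h2 : (2 * c) * (π (K ×ˢ L)ᶜ).toReal ≤ ε / 8 := by
      calc (2 * c) * (π (K ×ˢ L)ᶜ).toReal ≤ (2 * c) * (ε / (16 * (c + 1))) :=
            mul_le_mul_of_nonneg_left h1 (by linarith)
        _ ≤ ε / 8 := by
            have h4 : ε / (16*(c+1)) * (16*(c+1)) = ε := div_mul_cancel₀ _ (by positivity)
            nlinarith [hε.le, hc0, h4, (show (0:ℝ) ≤ ε/(16*(c+1)) by positivity)]
    linarith
  -- combine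
  obtain ⟨N, hN⟩ := Metric.tendsto_atTop.mp hA (ε/4) (by linarith)
  refine ⟨N, fun n hn => ?_⟩
  rw [Real.dist_eq]
  have t1 := est_n n
  have t2 := hN n hn
  rw [Real.dist_eq] at t2
  have t3 := est_π
  set a := ∫ ω, G (U n ω, V n ω) ∂(P n)
  set b := ∑ j ∈ t, ∫ ω, φ j (U n ω) * Gy j (V n ω) ∂(P n)
  set d := ∑ j ∈ t, (∫ x, φ j x ∂μ₀) * ∫ y, Gy j y ∂ν
  set e := ∫ q, G q ∂(μ₀.prod ν)
  have habc : |a - e| ≤ |a - b| + |b - d| + |d - e| := by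
    have h1 : |a - e| ≤ |a - d| + |d - e| := abs_sub_le a d e
    have h2 : |a - d| ≤ |a - b| + |b - d| := abs_sub_le a b d
    linarith
  have : |d - e| = |e - d| := abs_sub_comm d e
  linarith
end
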